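/- arXiv:1503.02163 — 4 statements merged into one kernel-verified Lean document; each statement's English description precedes it below -/
import Mathlib

section
/- Let 𝒳 be a set, x_1,...,x_n, x′_1,...,x′_n ∈ 𝒳, and let f, g : 𝒳 → [0,1]. Let Φ : ℝⁿ → ℝ be twice differentiable and satisfy ‖∂_k Φ‖_∞ ≤ L for every k ∈ {1,...,n} and √(Σ_{k=1}^n ‖Σ_{l : l ≠ k} (∂_{lk} Φ)²‖_∞) ≤ M. For σ ∈ {0,1}ⁿ set Y_f(σ) = Φ( Σ_i [σ_i f(x_i) + (1−σ_i) f(x′_i)] e_i ) − Φ( Σ_i [σ_i f(x′_i) + (1−σ_i) f(x_i)] e_i ), and define Y_g analogously; set Z(σ) = Y_f(σ) − Y_g(σ), and d(f,g)² = Σ_{i=1}^n (f(x_i) − g(x_i))² + (f(x′_i) − g(x′_i))². If σ is chosen uniformly at random from {0,1}ⁿ, then for every s > 0, Pr{ Z(σ) − E[Z(σ)] > s } ≤ exp( −s² / (8 (M² + L²) d(f,g)²) ). -/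
open Finset

/-- `∂_k Φ`, the partial derivative of `Φ : ℝⁿ → ℝ` with respect to the `k`-th variable. -/
noncomputable def pderiv1 {n : ℕ} (Φ : (Fin n → ℝ) → ℝ) (k : Fin n) (x : Fin n → ℝ) : ℝ :=
  fderiv ℝ Φ x (Pi.single k 1)

/-- `∂_{lk} Φ`, the second mixed partial derivative of `Φ` w.r.t. the `k`-th and `l`-th
variables. -/
noncomputable def pderiv2 {n : ℕ} (Φ : (Fin n → ℝ) → ℝ) (l k : Fin n) (x : Fin n → ℝ) : ℝ :=
  fderiv ℝ (fun y => pderiv1 Φ k y) x (Pi.single l 1)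

/-- The process `Y_f(σ) = Φ(∑_i [σ_i f(x_i) + (1-σ_i) f(x'_i)] e_i)
- Φ(∑_i [σ_i f(x'_i) + (1-σ_i) f(x_i)] e_i)`, with `σ ∈ {0,1}ⁿ` encoded by `Fin n → Bool`. -/
noncomputable def Yproc {𝒳 : Type*} {n : ℕ} (Φ : (Fin n → ℝ) → ℝ)
    (x x' : Fin n → 𝒳) (f : 𝒳 → ℝ) (σ : Fin n → Bool) : ℝ :=
  Φ (fun i => if σ i then f (x i) else f (x' i)) -
    Φ (fun i => if σ i then f (x' i) else f (x i))

lemma two_point (a b : ℝ) :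
    Real.exp a + Real.exp b ≤ 2 * Real.exp ((a + b) / 2 + (b - a) ^ 2 / 8) := by
  have h1 : Real.exp a + Real.exp b
      = 2 * Real.exp ((a + b) / 2) * Real.cosh ((b - a) / 2) := by
    have e1 : (a + b) / 2 + (b - a) / 2 = b := by ring
    have e2 : (a + b) / 2 + -((b - a) / 2) = a := by ring
    rw [Real.cosh_eq]
    have : 2 * Real.exp ((a + b) / 2) * ((Real.exp ((b - a) / 2) + Real.exp (-((b - a) / 2))) / 2)
        = Real.exp ((a + b) / 2) * Real.exp ((b - a) / 2)
          + Real.exp ((a + b) / 2) * Real.exp (-((b - a) / 2)) := by ring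
    rw [this, ← Real.exp_add, ← Real.exp_add, e1, e2, add_comm]
  have h2 : Real.cosh ((b - a) / 2) ≤ Real.exp (((b - a) / 2) ^ 2 / 2) :=
    Real.cosh_le_exp_half_sq _
  have h3 : ((b - a) / 2) ^ 2 / 2 = (b - a) ^ 2 / 8 := by ring
  calc Real.exp a + Real.exp b
      = 2 * Real.exp ((a + b) / 2) * Real.cosh ((b - a) / 2) := h1
    _ ≤ 2 * Real.exp ((a + b) / 2) * Real.exp ((b - a) ^ 2 / 8) := by
        rw [← h3]
        exact mul_le_mul_of_nonneg_left h2 (by positivity)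
    _ = 2 * Real.exp ((a + b) / 2 + (b - a) ^ 2 / 8) := by
        rw [Real.exp_add]; ring

lemma cube_sum_split {n : ℕ} (h : (Fin (n + 1) → Bool) → ℝ) :
    ∑ σ : Fin (n + 1) → Bool, h σ
      = ∑ ρ : Fin n → Bool, (h (Fin.cons false ρ) + h (Fin.cons true ρ)) := by
  rw [← (Fin.consEquiv (fun _ => Bool)).sum_comp]
  rw [Fintype.sum_prod_type]
  rw [Fintype.sum_bool]
  rw [← Finset.sum_add_distrib]
  simp [Fin.consEquiv, add_comm]

lemma cube_mgf {n : ℕ} (F : (Fin n → Bool) → ℝ) (c : Fin n → ℝ)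
    (hc : ∀ σ k, |F (Function.update σ k true) - F (Function.update σ k false)| ≤ c k) :
    ∑ σ : Fin n → Bool, Real.exp (F σ)
      ≤ 2 ^ n * Real.exp ((2 ^ n : ℝ)⁻¹ * (∑ σ : Fin n → Bool, F σ) + (∑ k, c k ^ 2) / 8) := by
  revert F c hc
  induction n with
  | zero =>
      intro F c hc
      simp only [pow_zero, inv_one, one_mul]
      rw [Finset.sum_eq_single_of_mem (fun _ => false) (Finset.mem_univ _) (by
        intro b _ hb; exact absurd (funext fun i => i.elim0) hb),
        Finset.sum_eq_single_of_mem (fun _ => false) (Finset.mem_univ _) (by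
        intro b _ hb; exact absurd (funext fun i => i.elim0) hb)]
      simp only [Finset.univ_eq_empty, Finset.sum_empty, zero_div, add_zero, le_refl]
  | succ n ih =>
      intro F c hc
      set G : (Fin n → Bool) → ℝ :=
        fun ρ => (F (Fin.cons false ρ) + F (Fin.cons true ρ)) / 2 with hG
      have hGc : ∀ ρ k, |G (Function.update ρ k true) - G (Function.update ρ k false)|
          ≤ c k.succ := by
        intro ρ k
        have h0 := hc (Fin.cons false ρ) k.succ
        have h1 := hc (Fin.cons true ρ) k.succ
        rw [← Fin.cons_update, ← Fin.cons_update] at h0 h1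
        have hid : G (Function.update ρ k true) - G (Function.update ρ k false)
            = ((F (Fin.cons false (Function.update ρ k true))
                - F (Fin.cons false (Function.update ρ k false)))
              + (F (Fin.cons true (Function.update ρ k true))
                - F (Fin.cons true (Function.update ρ k false)))) / 2 := by
          simp only [hG]; ring
        rw [hid, abs_div, abs_two]
        have := abs_add_le (F (Fin.cons false (Function.update ρ k true))
                - F (Fin.cons false (Function.update ρ k false)))
              (F (Fin.cons true (Function.update ρ k true))
                - F (Fin.cons true (Function.update ρ k false)))
        linarith
      have osc0 : ∀ ρ : Fin n → Bool, |F (Fin.cons true ρ) - F (Fin.cons false ρ)| ≤ c 0 := by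
        intro ρ
        have := hc (Fin.cons false ρ) 0
        rwa [Fin.update_cons_zero, Fin.update_cons_zero] at this
      rw [cube_sum_split (fun σ => Real.exp (F σ)), cube_sum_split F]
      have hsum : ∑ ρ : Fin n → Bool, G ρ
          = (∑ ρ : Fin n → Bool, (F (Fin.cons false ρ) + F (Fin.cons true ρ))) / 2 := by
        simp only [hG, Finset.sum_div]
      calc ∑ ρ : Fin n → Bool, (Real.exp (F (Fin.cons false ρ)) + Real.exp (F (Fin.cons true ρ)))
          ≤ ∑ ρ : Fin n → Bool, 2 * Real.exp (c 0 ^ 2 / 8) * Real.exp (G ρ) := by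
            apply Finset.sum_le_sum
            intro ρ _
            refine (two_point (F (Fin.cons false ρ)) (F (Fin.cons true ρ))).trans ?_
            rw [mul_assoc, ← Real.exp_add]
            apply mul_le_mul_of_nonneg_left ?_ (by norm_num)
            apply Real.exp_le_exp.2
            have hsq : (F (Fin.cons true ρ) - F (Fin.cons false ρ)) ^ 2 ≤ c 0 ^ 2 := by
              rw [← sq_abs]
              exact pow_le_pow_left₀ (abs_nonneg _) (osc0 ρ) 2
            have : (F (Fin.cons false ρ) + F (Fin.cons true ρ)) / 2 = G ρ := rfl
            rw [this]
            rw [add_comm (c 0 ^ 2 / 8) (G ρ)]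
            linarith
        _ = 2 * Real.exp (c 0 ^ 2 / 8) * ∑ ρ : Fin n → Bool, Real.exp (G ρ) := by
            rw [Finset.mul_sum]
        _ ≤ 2 * Real.exp (c 0 ^ 2 / 8) * (2 ^ n
              * Real.exp ((2 ^ n : ℝ)⁻¹ * (∑ ρ : Fin n → Bool, G ρ)
                + (∑ k : Fin n, c k.succ ^ 2) / 8)) := by
            exact mul_le_mul_of_nonneg_left (ih G (fun k => c k.succ) hGc) (by positivity)
        _ = 2 ^ (n + 1) * Real.exp ((2 ^ (n + 1) : ℝ)⁻¹
              * (∑ ρ : Fin n → Bool, (F (Fin.cons false ρ) + F (Fin.cons true ρ)))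
              + (∑ k : Fin (n + 1), c k ^ 2) / 8) := by
            rw [hsum, Fin.sum_univ_succ, pow_succ (2:ℝ) n]
            have harg : ((2 : ℝ) ^ n * 2)⁻¹
                  * (∑ ρ : Fin n → Bool, (F (Fin.cons false ρ) + F (Fin.cons true ρ)))
                  + (c 0 ^ 2 + ∑ i : Fin n, c i.succ ^ 2) / 8
                = c 0 ^ 2 / 8 + ((2 ^ n : ℝ)⁻¹
                  * ((∑ ρ : Fin n → Bool, (F (Fin.cons false ρ) + F (Fin.cons true ρ))) / 2)
                  + (∑ k : Fin n, c k.succ ^ 2) / 8) := by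
              rw [mul_inv]; ring
            conv_rhs => rw [harg, Real.exp_add, Real.exp_add]
            rw [Real.exp_add]
            ring

lemma mcdiarmid_count {n : ℕ} (F : (Fin n → Bool) → ℝ) (c : Fin n → ℝ) (K s : ℝ)
    (hc : ∀ σ k, |F (Function.update σ k true) - F (Function.update σ k false)| ≤ c k)
    (hK : ∑ k, c k ^ 2 ≤ K) (hK0 : 0 < K) (hs : 0 < s) :
    ((Finset.univ.filter (fun σ : Fin n → Bool =>
        s < F σ - (2 ^ n : ℝ)⁻¹ * ∑ τ : Fin n → Bool, F τ)).card : ℝ) / 2 ^ n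
      ≤ Real.exp (-2 * s ^ 2 / K) := by
  set μ := (2 ^ n : ℝ)⁻¹ * ∑ τ : Fin n → Bool, F τ with hμ
  set lam := 4 * s / K with hlam
  have hlam0 : 0 < lam := by positivity
  have hcard : ((Finset.univ.filter (fun σ : Fin n → Bool => s < F σ - μ)).card : ℝ)
      ≤ ∑ σ : Fin n → Bool, Real.exp (lam * (F σ - μ - s)) := by
    calc ((Finset.univ.filter (fun σ : Fin n → Bool => s < F σ - μ)).card : ℝ)
        = ∑ σ ∈ Finset.univ.filter (fun σ : Fin n → Bool => s < F σ - μ), (1 : ℝ) := by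
          simp
      _ ≤ ∑ σ ∈ Finset.univ.filter (fun σ : Fin n → Bool => s < F σ - μ),
            Real.exp (lam * (F σ - μ - s)) := by
          apply Finset.sum_le_sum
          intro σ hσ
          have hσ' := (Finset.mem_filter.1 hσ).2
          have : 0 ≤ lam * (F σ - μ - s) := by
            apply mul_nonneg hlam0.le
            linarith
          exact Real.one_le_exp this
      _ ≤ ∑ σ : Fin n → Bool, Real.exp (lam * (F σ - μ - s)) := by
          apply Finset.sum_le_sum_of_subset_of_nonneg (Finset.subset_univ _)
          intro σ _ _
          positivity
  have hmgf := cube_mgf (fun σ => lam * F σ) (fun k => lam * c k) (by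
    intro σ k
    have h := hc σ k
    have : lam * F (Function.update σ k true) - lam * F (Function.update σ k false)
        = lam * (F (Function.update σ k true) - F (Function.update σ k false)) := by ring
    rw [this, abs_mul, abs_of_pos hlam0]
    exact mul_le_mul_of_nonneg_left h hlam0.le)
  have h1 : ∑ σ : Fin n → Bool, Real.exp (lam * (F σ - μ - s))
      = Real.exp (-(lam * (μ + s))) * ∑ σ : Fin n → Bool, Real.exp (lam * F σ) := by
    rw [Finset.mul_sum]
    apply Finset.sum_congr rfl
    intro σ _
    rw [← Real.exp_add]
    congr 1
    ring
  have hsq : ∑ k, (lam * c k) ^ 2 = lam ^ 2 * ∑ k, c k ^ 2 := by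
    rw [Finset.mul_sum]
    apply Finset.sum_congr rfl
    intro k _
    ring
  have hmean : (2 ^ n : ℝ)⁻¹ * (∑ σ : Fin n → Bool, lam * F σ) = lam * μ := by
    rw [hμ, ← Finset.mul_sum]
    ring
  have key : ∑ σ : Fin n → Bool, Real.exp (lam * (F σ - μ - s))
      ≤ 2 ^ n * Real.exp (-2 * s ^ 2 / K) := by
    rw [h1]
    calc Real.exp (-(lam * (μ + s))) * ∑ σ : Fin n → Bool, Real.exp (lam * F σ)
        ≤ Real.exp (-(lam * (μ + s))) * (2 ^ n
            * Real.exp ((2 ^ n : ℝ)⁻¹ * (∑ σ : Fin n → Bool, lam * F σ)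
              + (∑ k, (lam * c k) ^ 2) / 8)) :=
          mul_le_mul_of_nonneg_left hmgf (Real.exp_nonneg _)
      _ = 2 ^ n * Real.exp (lam ^ 2 * (∑ k, c k ^ 2) / 8 - lam * s) := by
          rw [hmean, hsq]
          rw [show Real.exp (-(lam * (μ + s))) * (2 ^ n
              * Real.exp (lam * μ + lam ^ 2 * (∑ k, c k ^ 2) / 8))
            = 2 ^ n * (Real.exp (-(lam * (μ + s)))
              * Real.exp (lam * μ + lam ^ 2 * (∑ k, c k ^ 2) / 8)) from by ring,
            ← Real.exp_add]
          congr 2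
          ring
      _ ≤ 2 ^ n * Real.exp (-2 * s ^ 2 / K) := by
          apply mul_le_mul_of_nonneg_left _ (by positivity)
          apply Real.exp_le_exp.2
          have hKne : K ≠ 0 := ne_of_gt hK0
          have hexp : lam ^ 2 * K / 8 - lam * s = -2 * s ^ 2 / K := by
            rw [hlam]
            field_simp
            ring
          rw [← hexp]
          have : lam ^ 2 * (∑ k, c k ^ 2) / 8 ≤ lam ^ 2 * K / 8 := by
            apply div_le_div_of_nonneg_right ?_ (by norm_num)
            exact mul_le_mul_of_nonneg_left hK (by positivity)
          linarith
  rw [div_le_iff₀ (by positivity : (0:ℝ) < 2 ^ n)]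
  calc ((Finset.univ.filter (fun σ : Fin n → Bool => s < F σ - μ)).card : ℝ)
      ≤ ∑ σ : Fin n → Bool, Real.exp (lam * (F σ - μ - s)) := hcard
    _ ≤ 2 ^ n * Real.exp (-2 * s ^ 2 / K) := key
    _ = Real.exp (-2 * s ^ 2 / K) * 2 ^ n := by ring

lemma continuous_update_fn {n : ℕ} (p : Fin n → ℝ) (k : Fin n) :
    Continuous (fun r : ℝ => Function.update p k r) :=
  continuous_iff_continuousAt.2 fun r => (hasDerivAt_update p k r).continuousAt

lemma hasDerivAt_comp_update {n : ℕ} {Φ : (Fin n → ℝ) → ℝ} (hΦ : Differentiable ℝ Φ)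
    (p : Fin n → ℝ) (k : Fin n) (r : ℝ) :
    HasDerivAt (fun r => Φ (Function.update p k r))
      (pderiv1 Φ k (Function.update p k r)) r :=
  (hΦ _).hasFDerivAt.comp_hasDerivAt r (hasDerivAt_update p k r)

lemma fderiv_apply_eq_sum {n : ℕ} (Ψ : (Fin n → ℝ) → ℝ) (y u : Fin n → ℝ) :
    fderiv ℝ Ψ y u = ∑ l, u l * fderiv ℝ Ψ y (Pi.single l 1) := by
  conv_lhs => rw [pi_eq_sum_univ u]
  rw [map_sum]
  apply Finset.sum_congr rfl
  intro l _
  have h : (fun j => if l = j then (1 : ℝ) else 0) = Pi.single l (1 : ℝ) := by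
    funext j; simp [Pi.single_apply, eq_comm]
  rw [h, map_smul, smul_eq_mul]

lemma pd1_diff_bound {n : ℕ} {Φ : (Fin n → ℝ) → ℝ}
    (hΦ2 : ∀ k, Differentiable ℝ (pderiv1 Φ k)) {C : Fin n → ℝ}
    (hC : ∀ k, ∀ x, ∑ l ∈ Finset.univ.erase k, (pderiv2 Φ l k x) ^ 2 ≤ C k)
    (k : Fin n) (v w : Fin n → ℝ) (hvw : v k = w k) :
    |pderiv1 Φ k v - pderiv1 Φ k w|
      ≤ Real.sqrt (C k) * Real.sqrt (∑ l ∈ Finset.univ.erase k, (v l - w l) ^ 2) := by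
  set u : Fin n → ℝ := v - w with hu
  have huk : u k = 0 := by simp [hu, hvw]
  set B : ℝ := Real.sqrt (C k) * Real.sqrt (∑ l ∈ Finset.univ.erase k, (v l - w l) ^ 2) with hB
  set θ : ℝ → ℝ := fun t => pderiv1 Φ k (w + t • u) with hθdef
  have hline : ∀ t : ℝ, HasDerivAt (fun t : ℝ => w + t • u) u t := by
    intro t
    simpa using ((hasDerivAt_id t).smul_const u).const_add w
  have hθ : ∀ t : ℝ, HasDerivAt θ (fderiv ℝ (pderiv1 Φ k) (w + t • u) u) t := by
    intro t
    exact ((hΦ2 k) _).hasFDerivAt.comp_hasDerivAt t (hline t)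
  have hbound : ∀ t : ℝ, |fderiv ℝ (pderiv1 Φ k) (w + t • u) u| ≤ B := by
    intro t
    set y := w + t • u
    rw [fderiv_apply_eq_sum]
    have hsplit : ∑ l, u l * fderiv ℝ (pderiv1 Φ k) y (Pi.single l 1)
        = ∑ l ∈ Finset.univ.erase k, u l * pderiv2 Φ l k y := by
      rw [← Finset.sum_erase_add _ _ (Finset.mem_univ k), huk]
      simp [pderiv2]
    rw [hsplit]
    have hcs := Finset.sum_mul_sq_le_sq_mul_sq (Finset.univ.erase k)
      (fun l => u l) (fun l => pderiv2 Φ l k y)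
    have h1 : |∑ l ∈ Finset.univ.erase k, u l * pderiv2 Φ l k y|
        = Real.sqrt ((∑ l ∈ Finset.univ.erase k, u l * pderiv2 Φ l k y) ^ 2) := by
      rw [Real.sqrt_sq_eq_abs]
    rw [h1]
    calc Real.sqrt ((∑ l ∈ Finset.univ.erase k, u l * pderiv2 Φ l k y) ^ 2)
        ≤ Real.sqrt ((∑ l ∈ Finset.univ.erase k, u l ^ 2) * (C k)) := by
          apply Real.sqrt_le_sqrt
          refine hcs.trans ?_
          exact mul_le_mul_of_nonneg_left (hC k y)
            (Finset.sum_nonneg fun l _ => sq_nonneg _)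
      _ = B := by
          rw [Real.sqrt_mul (Finset.sum_nonneg fun l _ => sq_nonneg _), hB, mul_comm]
          have heq : ∑ l ∈ Finset.univ.erase k, u l ^ 2
              = ∑ l ∈ Finset.univ.erase k, (v l - w l) ^ 2 := by
            apply Finset.sum_congr rfl
            intro l _
            simp [hu]
          rw [heq]
  have key := convex_univ.norm_image_sub_le_of_norm_hasDerivWithin_le
    (f := θ) (f' := fun t => fderiv ℝ (pderiv1 Φ k) (w + t • u) u) (C := B)
    (fun t _ => (hθ t).hasDerivWithinAt)
    (fun t _ => by rw [Real.norm_eq_abs]; exact hbound t)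
    (Set.mem_univ (0 : ℝ)) (Set.mem_univ (1 : ℝ))
  have hθ1 : θ 1 = pderiv1 Φ k v := by
    have : w + (1 : ℝ) • u = v := by funext i; simp [hu]
    rw [hθdef]; simp only; rw [this]
  have hθ0 : θ 0 = pderiv1 Φ k w := by
    have : w + (0 : ℝ) • u = w := by funext i; simp
    rw [hθdef]; simp only; rw [this]
  rw [hθ1, hθ0, Real.norm_eq_abs] at key
  simpa using key

lemma bracket_bound {n : ℕ} {Φ : (Fin n → ℝ) → ℝ}
    (hΦ : Differentiable ℝ Φ) (hΦ2 : ∀ k, Differentiable ℝ (pderiv1 Φ k))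
    {L : ℝ} (hL : ∀ k, ∀ x, |pderiv1 Φ k x| ≤ L)
    {C : Fin n → ℝ} (hC : ∀ k, ∀ x, ∑ l ∈ Finset.univ.erase k, (pderiv2 Φ l k x) ^ 2 ≤ C k)
    (k : Fin n) (p q : Fin n → ℝ) (a b a' b' : ℝ) :
    |(Φ (Function.update p k b) - Φ (Function.update p k a))
        - (Φ (Function.update q k b') - Φ (Function.update q k a'))|
      ≤ |b - a| * (Real.sqrt (C k)
            * Real.sqrt (∑ l ∈ Finset.univ.erase k, (p l - q l) ^ 2))
        + L * (|a - a'| + |b - b'|) := by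
  set ψp : ℝ → ℝ := fun r => pderiv1 Φ k (Function.update p k r) with hψp
  set ψq : ℝ → ℝ := fun r => pderiv1 Φ k (Function.update q k r) with hψq
  have hψpc : Continuous ψp := (hΦ2 k).continuous.comp (continuous_update_fn p k)
  have hψqc : Continuous ψq := (hΦ2 k).continuous.comp (continuous_update_fn q k)
  have ftcp : ∫ r in a..b, ψp r = Φ (Function.update p k b) - Φ (Function.update p k a) :=
    intervalIntegral.integral_eq_sub_of_hasDerivAt
      (fun r _ => hasDerivAt_comp_update hΦ p k r) (hψpc.intervalIntegrable a b)
  have ftcq : ∫ r in a'..b', ψq r = Φ (Function.update q k b') - Φ (Function.update q k a') :=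
    intervalIntegral.integral_eq_sub_of_hasDerivAt
      (fun r _ => hasDerivAt_comp_update hΦ q k r) (hψqc.intervalIntegrable a' b')
  have h1 : (∫ r in a'..a, ψq r) + (∫ r in a..b, ψq r) = ∫ r in a'..b, ψq r :=
    intervalIntegral.integral_add_adjacent_intervals
      (hψqc.intervalIntegrable a' a) (hψqc.intervalIntegrable a b)
  have h2 : (∫ r in a'..b, ψq r) + (∫ r in b..b', ψq r) = ∫ r in a'..b', ψq r :=
    intervalIntegral.integral_add_adjacent_intervals
      (hψqc.intervalIntegrable a' b) (hψqc.intervalIntegrable b b')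
  have hsub : ∫ r in a..b, (ψp r - ψq r) = (∫ r in a..b, ψp r) - ∫ r in a..b, ψq r :=
    intervalIntegral.integral_sub (hψpc.intervalIntegrable a b) (hψqc.intervalIntegrable a b)
  have hdecomp : (Φ (Function.update p k b) - Φ (Function.update p k a))
      - (Φ (Function.update q k b') - Φ (Function.update q k a'))
      = (∫ r in a..b, (ψp r - ψq r)) - (∫ r in a'..a, ψq r) - (∫ r in b..b', ψq r) := by
    rw [hsub, ← ftcp, ← ftcq, ← h2, ← h1]
    ring
  rw [hdecomp]
  have hb1 : |∫ r in a..b, (ψp r - ψq r)|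
      ≤ (Real.sqrt (C k) * Real.sqrt (∑ l ∈ Finset.univ.erase k, (p l - q l) ^ 2)) * |b - a| := by
    rw [← Real.norm_eq_abs]
    apply intervalIntegral.norm_integral_le_of_norm_le_const
    intro r _
    rw [Real.norm_eq_abs]
    have hk : Function.update p k r k = Function.update q k r k := by simp
    have := pd1_diff_bound hΦ2 hC k (Function.update p k r) (Function.update q k r) hk
    refine this.trans ?_
    apply mul_le_mul_of_nonneg_left ?_ (Real.sqrt_nonneg _)
    apply Real.sqrt_le_sqrt
    apply le_of_eq
    apply Finset.sum_congr rfl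
    intro l hl
    have hlk : l ≠ k := Finset.ne_of_mem_erase hl
    rw [Function.update_of_ne hlk, Function.update_of_ne hlk]
  have hb2 : |∫ r in a'..a, ψq r| ≤ L * |a - a'| := by
    rw [← Real.norm_eq_abs]
    have := intervalIntegral.norm_integral_le_of_norm_le_const
      (C := L) (a := a') (b := a) (f := ψq)
      (fun r _ => by rw [Real.norm_eq_abs]; exact hL k _)
    exact this
  have hb3 : |∫ r in b..b', ψq r| ≤ L * |b - b'| := by
    rw [← Real.norm_eq_abs]
    have := intervalIntegral.norm_integral_le_of_norm_le_const
      (C := L) (a := b) (b := b') (f := ψq)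
      (fun r _ => by rw [Real.norm_eq_abs]; exact hL k _)
    rwa [abs_sub_comm b' b] at this
  calc |(∫ r in a..b, (ψp r - ψq r)) - (∫ r in a'..a, ψq r) - (∫ r in b..b', ψq r)|
      ≤ |∫ r in a..b, (ψp r - ψq r)| + |∫ r in a'..a, ψq r| + |∫ r in b..b', ψq r| := by
        have t1 := abs_sub (((∫ r in a..b, (ψp r - ψq r)) - (∫ r in a'..a, ψq r)))
          (∫ r in b..b', ψq r)
        have t2 := abs_sub (∫ r in a..b, (ψp r - ψq r)) (∫ r in a'..a, ψq r)
        linarith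
    _ ≤ |b - a| * (Real.sqrt (C k) * Real.sqrt (∑ l ∈ Finset.univ.erase k, (p l - q l) ^ 2))
        + L * (|a - a'| + |b - b'|) := by
        have hcomm : |b - a| * (Real.sqrt (C k)
              * Real.sqrt (∑ l ∈ Finset.univ.erase k, (p l - q l) ^ 2))
            = Real.sqrt (C k) * Real.sqrt (∑ l ∈ Finset.univ.erase k, (p l - q l) ^ 2)
              * |b - a| := by ring
        rw [hcomm]
        linarith

lemma vec_update_true {𝒳 : Type*} {n : ℕ} (x x' : Fin n → 𝒳) (h : 𝒳 → ℝ)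
    (σ : Fin n → Bool) (k : Fin n) :
    (fun i => if Function.update σ k true i then h (x i) else h (x' i))
      = Function.update (fun i => if σ i then h (x i) else h (x' i)) k (h (x k)) := by
  funext i
  by_cases hik : i = k
  · subst hik; simp
  · simp [Function.update_of_ne hik]

lemma vec_update_false {𝒳 : Type*} {n : ℕ} (x x' : Fin n → 𝒳) (h : 𝒳 → ℝ)
    (σ : Fin n → Bool) (k : Fin n) :
    (fun i => if Function.update σ k false i then h (x i) else h (x' i))
      = Function.update (fun i => if σ i then h (x i) else h (x' i)) k (h (x' k)) := by
  funext i
  by_cases hik : i = k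
  · subst hik; simp
  · simp [Function.update_of_ne hik]

lemma osc_bound {𝒳 : Type*} {n : ℕ} (x x' : Fin n → 𝒳) (f g : 𝒳 → ℝ)
    (hf : ∀ y, f y ∈ Set.Icc (0 : ℝ) 1) (hg : ∀ y, g y ∈ Set.Icc (0 : ℝ) 1)
    {Φ : (Fin n → ℝ) → ℝ} {L : ℝ}
    (hΦ : Differentiable ℝ Φ) (hΦ2 : ∀ k, Differentiable ℝ (pderiv1 Φ k))
    (hL : ∀ k, ∀ x, |pderiv1 Φ k x| ≤ L)
    {C : Fin n → ℝ} (hC : ∀ k, ∀ x, ∑ l ∈ Finset.univ.erase k, (pderiv2 Φ l k x) ^ 2 ≤ C k)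
    (σ : Fin n → Bool) (k : Fin n) :
    |(Yproc Φ x x' f (Function.update σ k true) - Yproc Φ x x' g (Function.update σ k true))
        - (Yproc Φ x x' f (Function.update σ k false)
            - Yproc Φ x x' g (Function.update σ k false))|
      ≤ 2 * (Real.sqrt (C k)
            * Real.sqrt (∑ i, ((f (x i) - g (x i)) ^ 2 + (f (x' i) - g (x' i)) ^ 2))
          + L * (|f (x k) - g (x k)| + |f (x' k) - g (x' k)|)) := by
  set D2 : ℝ := ∑ i, ((f (x i) - g (x i)) ^ 2 + (f (x' i) - g (x' i)) ^ 2) with hD2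
  set Pf : Fin n → ℝ := fun i => if σ i then f (x i) else f (x' i) with hPf
  set Pg : Fin n → ℝ := fun i => if σ i then g (x i) else g (x' i) with hPg
  set Wf : Fin n → ℝ := fun i => if σ i then f (x' i) else f (x i) with hWf
  set Wg : Fin n → ℝ := fun i => if σ i then g (x' i) else g (x i) with hWg
  have hYf1 : Yproc Φ x x' f (Function.update σ k true)
      = Φ (Function.update Pf k (f (x k))) - Φ (Function.update Wf k (f (x' k))) := by
    rw [Yproc, vec_update_true x x' f σ k, vec_update_true x' x f σ k]
  have hYf0 : Yproc Φ x x' f (Function.update σ k false)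
      = Φ (Function.update Pf k (f (x' k))) - Φ (Function.update Wf k (f (x k))) := by
    rw [Yproc, vec_update_false x x' f σ k, vec_update_false x' x f σ k]
  have hYg1 : Yproc Φ x x' g (Function.update σ k true)
      = Φ (Function.update Pg k (g (x k))) - Φ (Function.update Wg k (g (x' k))) := by
    rw [Yproc, vec_update_true x x' g σ k, vec_update_true x' x g σ k]
  have hYg0 : Yproc Φ x x' g (Function.update σ k false)
      = Φ (Function.update Pg k (g (x' k))) - Φ (Function.update Wg k (g (x k))) := by
    rw [Yproc, vec_update_false x x' g σ k, vec_update_false x' x g σ k]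
  set T1 : ℝ := (Φ (Function.update Pf k (f (x k))) - Φ (Function.update Pf k (f (x' k))))
      - (Φ (Function.update Pg k (g (x k))) - Φ (Function.update Pg k (g (x' k)))) with hT1
  set T2 : ℝ := (Φ (Function.update Wf k (f (x' k))) - Φ (Function.update Wf k (f (x k))))
      - (Φ (Function.update Wg k (g (x' k))) - Φ (Function.update Wg k (g (x k)))) with hT2
  have hE : (Yproc Φ x x' f (Function.update σ k true)
        - Yproc Φ x x' g (Function.update σ k true))
      - (Yproc Φ x x' f (Function.update σ k false)
        - Yproc Φ x x' g (Function.update σ k false)) = T1 - T2 := by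
    rw [hYf1, hYf0, hYg1, hYg0, hT1, hT2]; ring
  -- generic bound on the distance sums
  have hsum : ∀ (u v : Fin n → ℝ),
      (∀ l, (u l - v l) ^ 2 ≤ (f (x l) - g (x l)) ^ 2 + (f (x' l) - g (x' l)) ^ 2) →
      Real.sqrt (∑ l ∈ Finset.univ.erase k, (u l - v l) ^ 2) ≤ Real.sqrt D2 := by
    intro u v hb
    apply Real.sqrt_le_sqrt
    calc ∑ l ∈ Finset.univ.erase k, (u l - v l) ^ 2
        ≤ ∑ l, (u l - v l) ^ 2 :=
          Finset.sum_le_sum_of_subset_of_nonneg (Finset.erase_subset _ _)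
            (fun l _ _ => sq_nonneg _)
      _ ≤ D2 := Finset.sum_le_sum fun l _ => hb l
  have hPfg : ∀ l, (Pf l - Pg l) ^ 2 ≤ (f (x l) - g (x l)) ^ 2 + (f (x' l) - g (x' l)) ^ 2 := by
    intro l
    by_cases hσ : σ l
    · simp only [hPf, hPg, if_pos hσ]
      exact le_add_of_nonneg_right (sq_nonneg _)
    · simp only [hPf, hPg, if_neg hσ]
      exact le_add_of_nonneg_left (sq_nonneg _)
  have hWfg : ∀ l, (Wf l - Wg l) ^ 2 ≤ (f (x l) - g (x l)) ^ 2 + (f (x' l) - g (x' l)) ^ 2 := by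
    intro l
    by_cases hσ : σ l
    · simp only [hWf, hWg, if_pos hσ]
      exact le_add_of_nonneg_left (sq_nonneg _)
    · simp only [hWf, hWg, if_neg hσ]
      exact le_add_of_nonneg_right (sq_nonneg _)
  have habs1 : |f (x k) - f (x' k)| ≤ 1 := by
    have h1 := hf (x k); have h2 := hf (x' k)
    rw [Set.mem_Icc] at h1 h2
    rw [abs_le]; constructor <;> linarith
  have habs2 : |f (x' k) - f (x k)| ≤ 1 := by rwa [abs_sub_comm]
  have hb1 := bracket_bound hΦ hΦ2 hL hC k Pf Pg (f (x' k)) (f (x k)) (g (x' k)) (g (x k))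
  have hb2 := bracket_bound hΦ hΦ2 hL hC k Wf Wg (f (x k)) (f (x' k)) (g (x k)) (g (x' k))
  have hT1b : |T1| ≤ Real.sqrt (C k) * Real.sqrt D2
      + L * (|f (x k) - g (x k)| + |f (x' k) - g (x' k)|) := by
    refine hb1.trans ?_
    have hmul : |f (x k) - f (x' k)|
          * (Real.sqrt (C k) * Real.sqrt (∑ l ∈ Finset.univ.erase k, (Pf l - Pg l) ^ 2))
        ≤ 1 * (Real.sqrt (C k) * Real.sqrt D2) := by
      apply mul_le_mul habs1
        (mul_le_mul_of_nonneg_left (hsum Pf Pg hPfg) (Real.sqrt_nonneg _))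
        (by positivity) (by norm_num)
    rw [one_mul] at hmul
    have : |f (x' k) - g (x' k)| + |f (x k) - g (x k)|
        = |f (x k) - g (x k)| + |f (x' k) - g (x' k)| := by ring
    linarith [this ▸ le_refl (L * (|f (x' k) - g (x' k)| + |f (x k) - g (x k)|))]
  have hT2b : |T2| ≤ Real.sqrt (C k) * Real.sqrt D2
      + L * (|f (x k) - g (x k)| + |f (x' k) - g (x' k)|) := by
    refine hb2.trans ?_
    have hmul : |f (x' k) - f (x k)|
          * (Real.sqrt (C k) * Real.sqrt (∑ l ∈ Finset.univ.erase k, (Wf l - Wg l) ^ 2))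
        ≤ 1 * (Real.sqrt (C k) * Real.sqrt D2) := by
      apply mul_le_mul habs2
        (mul_le_mul_of_nonneg_left (hsum Wf Wg hWfg) (Real.sqrt_nonneg _))
        (by positivity) (by norm_num)
    rw [one_mul] at hmul
    linarith
  rw [hE]
  calc |T1 - T2| ≤ |T1| + |T2| := abs_sub _ _
    _ ≤ 2 * (Real.sqrt (C k) * Real.sqrt D2
          + L * (|f (x k) - g (x k)| + |f (x' k) - g (x' k)|)) := by linarith

set_option maxHeartbeats 1000000

/-- With `Z(σ) = Y_f(σ) - Y_g(σ)` and
`d(f,g)² = ∑_i (f(x_i)-g(x_i))² + (f(x'_i)-g(x'_i))²`, if `Φ` is twice differentiable with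
`‖∂_k Φ‖_∞ ≤ L` for all `k` and `√(∑_k ‖∑_{l ≠ k} (∂_{lk} Φ)²‖_∞) ≤ M`, then for `σ` uniform on
`{0,1}ⁿ` and every `s > 0`,
`Pr{Z(σ) - E[Z(σ)] > s} ≤ exp(-s² / (8 (M² + L²) d(f,g)²))`. -/
theorem statement3
    {𝒳 : Type*} {n : ℕ} (x x' : Fin n → 𝒳) (f g : 𝒳 → ℝ)
    (hf : ∀ y, f y ∈ Set.Icc (0 : ℝ) 1) (hg : ∀ y, g y ∈ Set.Icc (0 : ℝ) 1)
    (Φ : (Fin n → ℝ) → ℝ) (L M s : ℝ)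
    -- Φ is twice differentiable
    (hΦ : Differentiable ℝ Φ)
    (hΦ2 : ∀ k, Differentiable ℝ (pderiv1 Φ k))
    -- ‖∂_k Φ‖_∞ ≤ L for every k
    (hL : ∀ k, ∀ x, |pderiv1 Φ k x| ≤ L)
    -- √(∑_k ‖∑_{l ≠ k} (∂_{lk} Φ)²‖_∞) ≤ M
    (hM : ∃ C : Fin n → ℝ,
      (∀ k, ∀ x, ∑ l ∈ Finset.univ.erase k, (pderiv2 Φ l k x) ^ 2 ≤ C k) ∧
      Real.sqrt (∑ k, C k) ≤ M)
    (hs : 0 < s) :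
    -- probability w.r.t. σ uniform on {0,1}ⁿ, as (number of favorable σ) / 2ⁿ
    ((Finset.univ.filter (fun σ : Fin n → Bool =>
        s < (Yproc Φ x x' f σ - Yproc Φ x x' g σ) -
          (2 ^ n : ℝ)⁻¹ * ∑ τ : Fin n → Bool, (Yproc Φ x x' f τ - Yproc Φ x x' g τ))).card : ℝ)
        / 2 ^ n
      ≤ Real.exp (-s ^ 2 / (8 * (M ^ 2 + L ^ 2) *
          (∑ i, ((f (x i) - g (x i)) ^ 2 + (f (x' i) - g (x' i)) ^ 2)))) := by
  obtain ⟨C, hC, hM2⟩ := hM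
  set D2 : ℝ := ∑ i, ((f (x i) - g (x i)) ^ 2 + (f (x' i) - g (x' i)) ^ 2) with hD2
  by_cases hzero : ∀ σ : Fin n → Bool, Yproc Φ x x' f σ = Yproc Φ x x' g σ
  · have hempty : (Finset.univ.filter (fun σ : Fin n → Bool =>
        s < (Yproc Φ x x' f σ - Yproc Φ x x' g σ) -
          (2 ^ n : ℝ)⁻¹ * ∑ τ : Fin n → Bool, (Yproc Φ x x' f τ - Yproc Φ x x' g τ))) = ∅ := by
      apply Finset.filter_eq_empty_iff.2
      intro σ _
      have h1 : Yproc Φ x x' f σ - Yproc Φ x x' g σ = 0 := by rw [hzero σ]; ring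
      have h2 : ∑ τ : Fin n → Bool, (Yproc Φ x x' f τ - Yproc Φ x x' g τ) = 0 :=
        Finset.sum_eq_zero fun τ _ => by rw [hzero τ]; ring
      rw [h1, h2]
      simp only [mul_zero, sub_zero]
      exact not_lt.2 hs.le
    rw [hempty]
    simp only [Finset.card_empty, Nat.cast_zero, zero_div]
    exact (Real.exp_pos _).le
  -- non-degenerate case
  push_neg at hzero
  obtain ⟨σw, hσw⟩ := hzero
  -- n ≠ 0
  have hn : n ≠ 0 := by
    intro h
    subst h
    apply hσw
    have : (fun i : Fin 0 => if σw i then f (x i) else f (x' i))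
        = (fun i : Fin 0 => if σw i then f (x' i) else f (x i)) := by
      funext i; exact i.elim0
    rw [Yproc, Yproc, this]
    have : (fun i : Fin 0 => if σw i then g (x i) else g (x' i))
        = (fun i : Fin 0 => if σw i then g (x' i) else g (x i)) := by
      funext i; exact i.elim0
    rw [this]
    ring
  have k₀ : Fin n := ⟨0, Nat.pos_of_ne_zero hn⟩
  have hL0 : 0 ≤ L := le_trans (abs_nonneg _) (hL k₀ 0)
  have hM0 : 0 ≤ M := le_trans (Real.sqrt_nonneg _) hM2
  have hC0 : ∀ k, 0 ≤ C k := fun k =>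
    le_trans (Finset.sum_nonneg fun l _ => sq_nonneg _) (hC k 0)
  have hD2nn : 0 ≤ D2 := Finset.sum_nonneg fun i _ => by positivity
  -- D2 > 0
  have hD2pos : 0 < D2 := by
    rcases lt_or_eq_of_le hD2nn with h | h
    · exact h
    · exfalso
      apply hσw
      have hall := (Finset.sum_eq_zero_iff_of_nonneg
        (fun i (_ : i ∈ Finset.univ) => by positivity)).1 h.symm
      have heq : ∀ i, f (x i) = g (x i) ∧ f (x' i) = g (x' i) := by
        intro i
        have := hall i (Finset.mem_univ i)
        constructor
        · nlinarith [sq_nonneg (f (x i) - g (x i)), sq_nonneg (f (x' i) - g (x' i))]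
        · nlinarith [sq_nonneg (f (x i) - g (x i)), sq_nonneg (f (x' i) - g (x' i))]
      rw [Yproc, Yproc]
      have e1 : (fun i => if σw i then f (x i) else f (x' i))
          = (fun i => if σw i then g (x i) else g (x' i)) := by
        funext i
        rcases heq i with ⟨h1, h2⟩
        by_cases hσ : σw i <;> simp [hσ, h1, h2]
      have e2 : (fun i => if σw i then f (x' i) else f (x i))
          = (fun i => if σw i then g (x' i) else g (x i)) := by
        funext i
        rcases heq i with ⟨h1, h2⟩
        by_cases hσ : σw i <;> simp [hσ, h1, h2]
      rw [e1, e2]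
  -- M^2 + L^2 > 0
  have hMLpos : 0 < M ^ 2 + L ^ 2 := by
    rcases lt_or_eq_of_le (by positivity : (0:ℝ) ≤ M ^ 2 + L ^ 2) with h | h
    · exact h
    · exfalso
      have hLz : L = 0 := by nlinarith [sq_nonneg M, sq_nonneg L]
      have hfd : ∀ y : Fin n → ℝ, fderiv ℝ Φ y = 0 := by
        intro y
        apply ContinuousLinearMap.ext
        intro u
        rw [fderiv_apply_eq_sum]
        simp only [ContinuousLinearMap.zero_apply]
        apply Finset.sum_eq_zero
        intro l _
        have := hL l y
        rw [hLz] at this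
        have hz : pderiv1 Φ l y = 0 := abs_nonpos_iff.1 this
        rw [pderiv1] at hz
        rw [hz, mul_zero]
      have hconst : ∀ a b : Fin n → ℝ, Φ a = Φ b := fun a b =>
        is_const_of_fderiv_eq_zero hΦ hfd a b
      exact hσw (by rw [Yproc, Yproc, hconst (fun i => if σw i then f (x i) else f (x' i))
        (fun i => if σw i then f (x' i) else f (x i)), hconst
        (fun i => if σw i then g (x i) else g (x' i))
        (fun i => if σw i then g (x' i) else g (x i))]; ring)
  -- main case
  set c : Fin n → ℝ := fun k => 2 * (Real.sqrt (C k) * Real.sqrt D2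
      + L * (|f (x k) - g (x k)| + |f (x' k) - g (x' k)|)) with hc
  set K : ℝ := 16 * (M ^ 2 + L ^ 2) * D2 with hK
  have hKpos : 0 < K := by positivity
  have hosc : ∀ (σ : Fin n → Bool) (k : Fin n),
      |(fun σ => Yproc Φ x x' f σ - Yproc Φ x x' g σ) (Function.update σ k true)
        - (fun σ => Yproc Φ x x' f σ - Yproc Φ x x' g σ) (Function.update σ k false)| ≤ c k := by
    intro σ k
    exact osc_bound x x' f g hf hg hΦ hΦ2 hL hC σ k
  have hsumC : ∑ k, C k ≤ M ^ 2 := by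
    have h1 : ∑ k, C k = Real.sqrt (∑ k, C k) ^ 2 :=
      (Real.sq_sqrt (Finset.sum_nonneg fun k _ => hC0 k)).symm
    rw [h1]
    exact pow_le_pow_left₀ (Real.sqrt_nonneg _) hM2 2
  have hsumc : ∑ k, c k ^ 2 ≤ K := by
    have hterm : ∀ k, c k ^ 2 ≤ 8 * (C k * D2)
        + 16 * L ^ 2 * ((f (x k) - g (x k)) ^ 2 + (f (x' k) - g (x' k)) ^ 2) := by
      intro k
      have hA : (Real.sqrt (C k) * Real.sqrt D2) ^ 2 = C k * D2 := by
        rw [mul_pow, Real.sq_sqrt (hC0 k), Real.sq_sqrt hD2nn]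
      have hB : (|f (x k) - g (x k)| + |f (x' k) - g (x' k)|) ^ 2
          ≤ 2 * ((f (x k) - g (x k)) ^ 2 + (f (x' k) - g (x' k)) ^ 2) := by
        have e1 : |f (x k) - g (x k)| ^ 2 = (f (x k) - g (x k)) ^ 2 := sq_abs _
        have e2 : |f (x' k) - g (x' k)| ^ 2 = (f (x' k) - g (x' k)) ^ 2 := sq_abs _
        nlinarith [sq_nonneg (|f (x k) - g (x k)| - |f (x' k) - g (x' k)|)]
      have hcnn : 0 ≤ Real.sqrt (C k) * Real.sqrt D2 := by positivity
      have hBnn : 0 ≤ L * (|f (x k) - g (x k)| + |f (x' k) - g (x' k)|) := by positivity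
      have hsq : c k ^ 2 ≤ 8 * ((Real.sqrt (C k) * Real.sqrt D2) ^ 2
          + (L * (|f (x k) - g (x k)| + |f (x' k) - g (x' k)|)) ^ 2) := by
        have hck : c k = 2 * (Real.sqrt (C k) * Real.sqrt D2
            + L * (|f (x k) - g (x k)| + |f (x' k) - g (x' k)|)) := rfl
        rw [hck]
        nlinarith [sq_nonneg (Real.sqrt (C k) * Real.sqrt D2
          - L * (|f (x k) - g (x k)| + |f (x' k) - g (x' k)|))]
      refine hsq.trans ?_
      rw [hA]
      have : (L * (|f (x k) - g (x k)| + |f (x' k) - g (x' k)|)) ^ 2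
          = L ^ 2 * (|f (x k) - g (x k)| + |f (x' k) - g (x' k)|) ^ 2 := by ring
      rw [this]
      nlinarith [sq_nonneg L, hB, mul_le_mul_of_nonneg_left hB (sq_nonneg L)]
    calc ∑ k, c k ^ 2
        ≤ ∑ k, (8 * (C k * D2)
            + 16 * L ^ 2 * ((f (x k) - g (x k)) ^ 2 + (f (x' k) - g (x' k)) ^ 2)) :=
          Finset.sum_le_sum fun k _ => hterm k
      _ = 8 * D2 * (∑ k, C k) + 16 * L ^ 2 * D2 := by
          have e1 : ∑ k, 8 * (C k * D2) = 8 * D2 * ∑ k, C k := by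
            rw [Finset.mul_sum]
            apply Finset.sum_congr rfl
            intro k _
            ring
          have e2 : ∑ k, 16 * L ^ 2 * ((f (x k) - g (x k)) ^ 2 + (f (x' k) - g (x' k)) ^ 2)
              = 16 * L ^ 2 * D2 := by rw [hD2, Finset.mul_sum]
          rw [Finset.sum_add_distrib, e1, e2]
      _ ≤ 8 * D2 * M ^ 2 + 16 * L ^ 2 * D2 := by
          have := mul_le_mul_of_nonneg_left hsumC (by positivity : (0:ℝ) ≤ 8 * D2)
          linarith
      _ ≤ K := by rw [hK]; nlinarith [sq_nonneg M, hD2nn]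
  have hmain := mcdiarmid_count (fun σ => Yproc Φ x x' f σ - Yproc Φ x x' g σ) c K s
    hosc hsumc hKpos hs
  refine hmain.trans ?_
  apply Real.exp_le_exp.2
  apply le_of_eq
  rw [hK]
  have h1 : (M ^ 2 + L ^ 2) ≠ 0 := ne_of_gt hMLpos
  have h2 : D2 ≠ 0 := ne_of_gt hD2pos
  field_simp
  ring
end

section
/- Let Φ : ℝⁿ → ℝ be twice continuously differentiable, let k ∈ {1,...,n}, let A, B ∈ [0,1]ⁿ, and let a, b ∈ [0,1]. Let Φ_k(v, y) denote Φ evaluated at the vector that agrees with v in all coordinates except the k-th, which is set equal to y. Then the second-order difference T = [Φ_k(A, a) − Φ_k(A, b)] − [Φ_k(B, a) − Φ_k(B, b)] satisfies T² ≤ ‖ Σ_{l : l ≠ k} (∂_{lk} Φ)² ‖_∞ · Σ_{l : l ≠ k} (A_l − B_l)². -/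
open Finset

/-- Let `Φ : ℝⁿ → ℝ` be twice continuously differentiable, `k ∈ {1,…,n}`,
`A, B ∈ [0,1]ⁿ` and `a, b ∈ [0,1]`. With `Φ_k(v,y)` denoting `Φ` evaluated at `v` with its
`k`-th coordinate replaced by `y`, the second-order difference
`T = [Φ_k(A,a) - Φ_k(A,b)] - [Φ_k(B,a) - Φ_k(B,b)]` satisfies
`T² ≤ ‖∑_{l ≠ k} (∂_{lk} Φ)²‖_∞ ⬝ ∑_{l ≠ k} (A_l - B_l)²`; the sup-norm bound is expressed by
quantifying over all upper bounds `C` of `x ↦ ∑_{l ≠ k} (∂_{lk} Φ x)²`. -/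
theorem statement5
    {n : ℕ} (Φ : (Fin n → ℝ) → ℝ) (hΦ : ContDiff ℝ 2 Φ) (k : Fin n)
    (A B : Fin n → ℝ) (hA : ∀ i, A i ∈ Set.Icc (0 : ℝ) 1) (hB : ∀ i, B i ∈ Set.Icc (0 : ℝ) 1)
    (a b : ℝ) (ha : a ∈ Set.Icc (0 : ℝ) 1) (hb : b ∈ Set.Icc (0 : ℝ) 1)
    (C : ℝ) (hC : ∀ x : Fin n → ℝ, ∑ l ∈ Finset.univ.erase k, (pderiv2 Φ l k x) ^ 2 ≤ C) :
    ((Φ (Function.update A k a) - Φ (Function.update A k b))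
      - (Φ (Function.update B k a) - Φ (Function.update B k b))) ^ 2
      ≤ C * ∑ l ∈ Finset.univ.erase k, (A l - B l) ^ 2 := by
  classical
  set S : ℝ := ∑ l ∈ Finset.univ.erase k, (A l - B l) ^ 2 with hS
  have hSnn : 0 ≤ S := Finset.sum_nonneg fun _ _ => sq_nonneg _
  have hCnn : 0 ≤ C := le_trans (Finset.sum_nonneg fun _ _ => sq_nonneg _) (hC 0)
  set M : ℝ := Real.sqrt (C * S) with hM
  have hΦd : Differentiable ℝ Φ := hΦ.differentiable (by norm_num)
  have hFd : Differentiable ℝ (pderiv1 Φ k) := by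
    have h1 : ContDiff ℝ 1 (fderiv ℝ Φ) := hΦ.fderiv_right (by norm_num)
    exact ((ContinuousLinearMap.apply ℝ ℝ (Pi.single k 1)).differentiable.comp
      (h1.differentiable (by norm_num)) : _)
  set V : Fin n → ℝ := fun i => if i = k then 0 else A i - B i with hVdef
  have hV : V = ∑ l ∈ Finset.univ.erase k, (A l - B l) • (Pi.single l 1 : Fin n → ℝ) := by
    funext i
    rw [Finset.sum_apply]
    simp only [Pi.smul_apply, Pi.single_apply, smul_eq_mul, mul_ite, mul_one, mul_zero]
    rw [Finset.sum_ite_eq]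
    simp only [Finset.mem_erase, Finset.mem_univ, and_true, hVdef]
    by_cases hik : i = k <;> simp [hik]
  -- value of the derivative of pderiv1 in direction V, with Cauchy-Schwarz bound
  have key : ∀ x : Fin n → ℝ, |fderiv ℝ (pderiv1 Φ k) x V| ≤ M := by
    intro x
    have hLV : fderiv ℝ (pderiv1 Φ k) x V
        = ∑ l ∈ Finset.univ.erase k, (A l - B l) * pderiv2 Φ l k x := by
      rw [hV, map_sum]
      refine Finset.sum_congr rfl fun l _ => ?_
      rw [map_smul, smul_eq_mul]
      rfl
    have hcs := Finset.sum_mul_sq_le_sq_mul_sq (Finset.univ.erase k)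
      (fun l => A l - B l) (fun l => pderiv2 Φ l k x)
    have hsq : (fderiv ℝ (pderiv1 Φ k) x V) ^ 2 ≤ C * S := by
      rw [hLV]
      calc (∑ l ∈ Finset.univ.erase k, (A l - B l) * pderiv2 Φ l k x) ^ 2
          ≤ (∑ l ∈ Finset.univ.erase k, (A l - B l) ^ 2)
            * ∑ l ∈ Finset.univ.erase k, (pderiv2 Φ l k x) ^ 2 := hcs
        _ ≤ S * C := mul_le_mul_of_nonneg_left (hC x) hSnn
        _ = C * S := mul_comm _ _
    exact Real.abs_le_sqrt hsq
  -- inner mean value bound: for every y, the difference of pderiv1 is ≤ M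
  have inner : ∀ y : ℝ,
      |pderiv1 Φ k (Function.update A k y) - pderiv1 Φ k (Function.update B k y)| ≤ M := by
    intro y
    set P : Fin n → ℝ := Function.update B k y with hP
    have hpath : ∀ t : ℝ, HasDerivAt (fun t : ℝ => P + t • V) V t := fun t => by
      simpa using ((hasDerivAt_id t).smul_const V).const_add P
    have hg : ∀ t : ℝ, HasDerivAt (fun t : ℝ => pderiv1 Φ k (P + t • V))
        (fderiv ℝ (pderiv1 Φ k) (P + t • V) V) t := fun t =>
      by have := ((hFd (P + t • V)).hasFDerivAt).comp_hasDerivAt t (hpath t); exact this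
    have hmvt := Convex.norm_image_sub_le_of_norm_hasDerivWithin_le
      (f := fun t : ℝ => pderiv1 Φ k (P + t • V))
      (f' := fun t => fderiv ℝ (pderiv1 Φ k) (P + t • V) V) (C := M)
      (fun t _ => (hg t).hasDerivWithinAt) (fun t _ => key _) convex_univ
      (Set.mem_univ (0 : ℝ)) (Set.mem_univ (1 : ℝ))
    have h1 : P + V = Function.update A k y := by
      funext i
      by_cases hik : i = k <;> simp [hP, hVdef, Function.update_apply, hik]
    simpa [h1, Real.norm_eq_abs] using hmvt
  -- outer mean value bound
  have hG : ∀ y : ℝ, HasDerivAt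
      (fun y : ℝ => Φ (Function.update A k y) - Φ (Function.update B k y))
      (pderiv1 Φ k (Function.update A k y) - pderiv1 Φ k (Function.update B k y)) y := by
    intro y
    exact (((hΦd _).hasFDerivAt).comp_hasDerivAt y (hasDerivAt_update A k y)).sub
      (((hΦd _).hasFDerivAt).comp_hasDerivAt y (hasDerivAt_update B k y))
  have houter := Convex.norm_image_sub_le_of_norm_hasDerivWithin_le
    (f := fun y : ℝ => Φ (Function.update A k y) - Φ (Function.update B k y))
    (f' := fun y => pderiv1 Φ k (Function.update A k y) - pderiv1 Φ k (Function.update B k y))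
    (C := M)
    (fun y _ => (hG y).hasDerivWithinAt) (fun y _ => inner y) convex_univ
    (Set.mem_univ b) (Set.mem_univ a)
  have hab : |a - b| ≤ 1 := by
    rw [abs_le]
    constructor <;> [linarith [ha.1, ha.2, hb.1, hb.2]; linarith [ha.1, ha.2, hb.1, hb.2]]
  have hMnn : 0 ≤ M := Real.sqrt_nonneg _
  have hT : |((Φ (Function.update A k a) - Φ (Function.update A k b))
      - (Φ (Function.update B k a) - Φ (Function.update B k b)))| ≤ M := by
    have : |((Φ (Function.update A k a) - Φ (Function.update B k a))
        - (Φ (Function.update A k b) - Φ (Function.update B k b)))| ≤ M * |a - b| := by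
      simpa [Real.norm_eq_abs] using houter
    calc |((Φ (Function.update A k a) - Φ (Function.update A k b))
        - (Φ (Function.update B k a) - Φ (Function.update B k b)))|
        = |((Φ (Function.update A k a) - Φ (Function.update B k a))
        - (Φ (Function.update A k b) - Φ (Function.update B k b)))| := by ring_nf
      _ ≤ M * |a - b| := this
      _ ≤ M * 1 := mul_le_mul_of_nonneg_left hab hMnn
      _ = M := mul_one M
  calc ((Φ (Function.update A k a) - Φ (Function.update A k b))
      - (Φ (Function.update B k a) - Φ (Function.update B k b))) ^ 2
      = |((Φ (Function.update A k a) - Φ (Function.update A k b))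
      - (Φ (Function.update B k a) - Φ (Function.update B k b)))| ^ 2 := (sq_abs _).symm
    _ ≤ M ^ 2 := pow_le_pow_left₀ (abs_nonneg _) hT 2
    _ = C * S := Real.sq_sqrt (mul_nonneg hCnn hSnn)
end

section
/- Let X = (X_1, ..., X_n) be a vector of independent random variables with values in a set 𝒳, let X′ be an independent copy of X, let ℱ be a finite class of functions f : 𝒳 → [0,1], and let Φ : ℝⁿ → ℝ be measurable and bounded on [0,1]ⁿ. Then E[ sup_{f ∈ ℱ} ( E[Φ(f(X))] − Φ(f(X)) ) ] ≤ E_{X,X′} E_σ [ sup_{f ∈ ℱ} ( Φ( Σ_i [σ_i f(X_i) + (1−σ_i) f(X′_i)] e_i ) − Φ( Σ_i [σ_i f(X′_i) + (1−σ_i) f(X_i)] e_i ) ) ], where σ is uniformly distributed on {0,1}ⁿ, independent of X and X′. -/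
open MeasureTheory ProbabilityTheory Finset

private lemma abs_sup'_le' {α : Type*} {s : Finset α} (hs : s.Nonempty) (t : α → ℝ) {C : ℝ}
    (h : ∀ a ∈ s, |t a| ≤ C) : |s.sup' hs t| ≤ C := by
  rw [abs_le]
  obtain ⟨a, ha⟩ := hs
  exact ⟨le_trans (abs_le.1 (h a ha)).1 (Finset.le_sup' t ha),
    Finset.sup'_le _ _ fun b hb => (abs_le.1 (h b hb)).2⟩

private lemma integrable_of_abs_le' {α : Type*} [MeasurableSpace α] {μ : Measure α}
    [IsFiniteMeasure μ] {h : α → ℝ} (hm : Measurable h) {C : ℝ} (hb : ∀ x, |h x| ≤ C) :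
    Integrable h μ :=
  Integrable.mono' (integrable_const C) hm.aestronglyMeasurable
    (Filter.Eventually.of_forall fun x => by simpa using hb x)

private lemma map_pi_of_iIndep' {𝒳 Ω : Type} [MeasurableSpace 𝒳] [MeasurableSpace Ω]
    (P : Measure Ω) [IsProbabilityMeasure P] {n : ℕ} {X : Fin n → Ω → 𝒳}
    (hXmeas : ∀ i, Measurable (X i))
    (hXindep : iIndepFun X P) :
    Measure.map (fun ω i => X i ω) P = Measure.pi (fun i => Measure.map (X i) P) := by
  haveI : ∀ i, IsProbabilityMeasure (Measure.map (X i) P) :=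
    fun i => Measure.isProbabilityMeasure_map (hXmeas i).aemeasurable
  refine (Measure.pi_eq fun s hs => ?_).symm
  rw [Measure.map_apply (measurable_pi_lambda _ hXmeas) (MeasurableSet.univ_pi hs)]
  have h1 : (fun ω i => X i ω) ⁻¹' Set.pi Set.univ s = ⋂ i ∈ Finset.univ, X i ⁻¹' s i := by
    ext ω; simp [Set.mem_pi]
  rw [h1, hXindep.measure_inter_preimage_eq_mul Finset.univ (fun i _ => hs i)]
  exact Finset.prod_congr rfl fun i _ => (Measure.map_apply (hXmeas i) (hs i)).symm

/-- The symmetrized supremum functional. -/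
private def gfun {𝒳 : Type} {n : ℕ} (F : Finset (𝒳 → ℝ)) (hFne : F.Nonempty)
    (Φ : (Fin n → ℝ) → ℝ) (σ : Fin n → Bool) (v : Fin n → 𝒳 × 𝒳) : ℝ :=
  F.sup' hFne (fun f => Φ (fun i => if σ i then f (v i).1 else f (v i).2)
    - Φ (fun i => if σ i then f (v i).2 else f (v i).1))

/-- **symmetrization.** Let `X = (X_1,…,X_n)` be independent `𝒳`-valued random
variables, `X'` an independent copy of `X`, `F` a finite class of measurable functions
`f : 𝒳 → [0,1]`, and `Φ : ℝⁿ → ℝ` measurable and bounded on `[0,1]ⁿ`. Then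
`E[sup_{f ∈ F} (E[Φ(f(X))] - Φ(f(X)))]
  ≤ E_{X,X'} E_σ [sup_{f ∈ F} (Φ(∑_i [σ_i f(X_i) + (1-σ_i) f(X'_i)] e_i)
        - Φ(∑_i [σ_i f(X'_i) + (1-σ_i) f(X_i)] e_i))]`,
where `σ` is uniform on `{0,1}ⁿ` (its expectation is the average over `Fin n → Bool`),
independent of `X` and `X'`. -/
theorem statement8
    (𝒳 Ω Ω' : Type) [MeasurableSpace 𝒳] [MeasurableSpace Ω] [MeasurableSpace Ω']
    (P : Measure Ω) (P' : Measure Ω')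
    [IsProbabilityMeasure P] [IsProbabilityMeasure P']
    (n : ℕ) (X : Fin n → Ω → 𝒳) (X' : Fin n → Ω' → 𝒳)
    (F : Finset (𝒳 → ℝ)) (hFne : F.Nonempty)
    (Φ : (Fin n → ℝ) → ℝ) (K : ℝ)
    -- X is a vector of independent random variables
    (hXmeas : ∀ i, Measurable (X i))
    (hXindep : iIndepFun X P)
    -- X' is an independent copy of X (modelled on its own probability space)
    (hX'meas : ∀ i, Measurable (X' i))
    (hX'indep : iIndepFun X' P')
    (hX'copy : ∀ i, Measure.map (X' i) P' = Measure.map (X i) P)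
    -- F is a finite class of measurable functions with values in [0,1]
    (hFmeas : ∀ f ∈ F, Measurable f)
    (hFrange : ∀ f ∈ F, ∀ x : 𝒳, f x ∈ Set.Icc (0 : ℝ) 1)
    -- Φ is measurable and bounded on [0,1]ⁿ
    (hΦmeas : Measurable Φ)
    (hΦbdd : ∀ y : Fin n → ℝ, (∀ i, y i ∈ Set.Icc (0 : ℝ) 1) → |Φ y| ≤ K) :
    (∫ ω, F.sup' hFne (fun f =>
        (∫ ω₀, Φ (fun i => f (X i ω₀)) ∂P) - Φ (fun i => f (X i ω))) ∂P)
      ≤ ∫ ω, (∫ ω', (2 ^ n : ℝ)⁻¹ * ∑ σ : Fin n → Bool,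
          F.sup' hFne (fun f =>
            Φ (fun i => if σ i then f (X i ω) else f (X' i ω'))
              - Φ (fun i => if σ i then f (X' i ω') else f (X i ω))) ∂P') ∂P := by
  classical
  -- basic bounds
  have hΦK : ∀ f ∈ F, ∀ y : Fin n → 𝒳 → ℝ, True → True := fun _ _ _ _ => trivial
  have hΦb : ∀ f ∈ F, ∀ (u : Fin n → 𝒳), |Φ (fun i => f (u i))| ≤ K :=
    fun f hf u => hΦbdd _ (fun i => hFrange f hf (u i))
  -- marginal laws
  set m : Fin n → Measure 𝒳 := fun i => Measure.map (X i) P with hm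
  haveI hmprob : ∀ i, IsProbabilityMeasure (m i) :=
    fun i => Measure.isProbabilityMeasure_map (hXmeas i).aemeasurable
  set μ : Measure (Fin n → 𝒳 × 𝒳) := Measure.pi (fun i => (m i).prod (m i)) with hμdef
  haveI : IsProbabilityMeasure μ := by rw [hμdef]; infer_instance
  have hlawX : Measure.map (fun ω i => X i ω) P = Measure.pi m :=
    map_pi_of_iIndep' P hXmeas hXindep
  have hlawX' : Measure.map (fun ω' i => X' i ω') P' = Measure.pi m := by
    rw [map_pi_of_iIndep' P' hX'meas hX'indep]
    exact congrArg Measure.pi (funext fun i => hX'copy i)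
  haveI : IsProbabilityMeasure (Measure.pi m) := by infer_instance
  -- the coupling map
  set Y : Ω × Ω' → (Fin n → 𝒳 × 𝒳) := fun p i => (X i p.1, X' i p.2) with hYdef
  have hYmeas : Measurable Y := measurable_pi_lambda _ fun i =>
    ((hXmeas i).comp measurable_fst).prodMk ((hX'meas i).comp measurable_snd)
  have hYpres : MeasurePreserving Y (P.prod P') μ := by
    have h1 : MeasurePreserving (Prod.map (fun ω i => X i ω) (fun ω' i => X' i ω'))
        (P.prod P') ((Measure.pi m).prod (Measure.pi m)) :=
      MeasurePreserving.prod ⟨measurable_pi_lambda _ hXmeas, hlawX⟩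
        ⟨measurable_pi_lambda _ hX'meas, hlawX'⟩
    have h2 : MeasurePreserving (MeasurableEquiv.arrowProdEquivProdArrow 𝒳 𝒳 (Fin n)).symm
        ((Measure.pi m).prod (Measure.pi m)) μ :=
      (measurePreserving_arrowProdEquivProdArrow 𝒳 𝒳 (Fin n) m m).symm _
    have h3 : Y = (MeasurableEquiv.arrowProdEquivProdArrow 𝒳 𝒳 (Fin n)).symm ∘
        (Prod.map (fun ω i => X i ω) (fun ω' i => X' i ω')) := rfl
    rw [h3]; exact h2.comp h1
  -- swap maps are measure preserving
  have hSpres : ∀ σ : Fin n → Bool, MeasurePreserving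
      (fun (v : Fin n → 𝒳 × 𝒳) i => if σ i then v i else (v i).swap) μ μ := by
    intro σ
    refine measurePreserving_pi (fun i => (m i).prod (m i)) (fun i => (m i).prod (m i))
      (f := fun i (x : 𝒳 × 𝒳) => if σ i then x else x.swap) (fun i => ?_)
    by_cases h : σ i
    · simp only [h, if_true]
      exact MeasurePreserving.id _
    · simp only [h, Bool.false_eq_true, if_false]
      exact Measure.measurePreserving_swap
  -- properties of gfun
  have hGmeas0 : ∀ σ : Fin n → Bool, Measurable (gfun F hFne Φ σ) := by
    intro σ
    have h1 : ∀ f ∈ F, Measurable (fun v : Fin n → 𝒳 × 𝒳 =>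
        Φ (fun i => if σ i then f (v i).1 else f (v i).2)
          - Φ (fun i => if σ i then f (v i).2 else f (v i).1)) := by
      intro f hf
      have hA : Measurable (fun v : Fin n → 𝒳 × 𝒳 =>
          (fun i => if σ i then f (v i).1 else f (v i).2)) :=
        measurable_pi_lambda _ fun i => by
          by_cases h : σ i <;>
            simp only [h, Bool.false_eq_true, if_true, if_false] <;>
          [exact (hFmeas f hf).comp (measurable_fst.comp (measurable_pi_apply i));
           exact (hFmeas f hf).comp (measurable_snd.comp (measurable_pi_apply i))]
      have hB : Measurable (fun v : Fin n → 𝒳 × 𝒳 =>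
          (fun i => if σ i then f (v i).2 else f (v i).1)) :=
        measurable_pi_lambda _ fun i => by
          by_cases h : σ i <;>
            simp only [h, Bool.false_eq_true, if_true, if_false] <;>
          [exact (hFmeas f hf).comp (measurable_snd.comp (measurable_pi_apply i));
           exact (hFmeas f hf).comp (measurable_fst.comp (measurable_pi_apply i))]
      exact (hΦmeas.comp hA).sub (hΦmeas.comp hB)
    have h2 := Finset.measurable_sup' hFne h1
    have h3 : (F.sup' hFne (fun f (v : Fin n → 𝒳 × 𝒳) =>
        Φ (fun i => if σ i then f (v i).1 else f (v i).2)
          - Φ (fun i => if σ i then f (v i).2 else f (v i).1)))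
        = gfun F hFne Φ σ := by
      funext v
      exact Finset.sup'_apply hFne _ v
    rwa [h3] at h2
  have hGabs : ∀ σ : Fin n → Bool, ∀ v, |gfun F hFne Φ σ v| ≤ K + K := by
    intro σ v
    refine abs_sup'_le' hFne _ (fun f hf => ?_)
    refine le_trans (abs_sub _ _) (add_le_add ?_ ?_) <;>
    · refine hΦbdd _ (fun i => ?_)
      by_cases h : σ i <;> simp only [h, Bool.false_eq_true, if_true, if_false] <;>
        exact hFrange f hf _
  -- gfun σ is gfun "all-true" composed with a swap
  have hGS : ∀ σ : Fin n → Bool, ∀ v, gfun F hFne Φ σ v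
      = gfun F hFne Φ (fun _ => true) (fun i => if σ i then v i else (v i).swap) := by
    intro σ v
    refine Finset.sup'_congr hFne rfl (fun f _ => ?_)
    congr 1 <;> · congr 1; funext i; by_cases h : σ i <;> simp [h]
  -- all σ give the same integral against μ
  have hGint_eq : ∀ σ : Fin n → Bool,
      ∫ v, gfun F hFne Φ σ v ∂μ = ∫ v, gfun F hFne Φ (fun _ => true) v ∂μ := by
    intro σ
    rw [show (fun v => gfun F hFne Φ σ v)
        = fun v => gfun F hFne Φ (fun _ => true) (fun i => if σ i then v i else (v i).swap)
      from funext (hGS σ)]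
    conv_rhs => rw [← (hSpres σ).map_eq]
    rw [integral_map (hSpres σ).measurable.aemeasurable
      (hGmeas0 (fun _ => true)).aestronglyMeasurable]
  -- pulling back along Y
  have hGY : ∀ σ : Fin n → Bool,
      ∫ p, gfun F hFne Φ σ (Y p) ∂(P.prod P') = ∫ v, gfun F hFne Φ σ v ∂μ := by
    intro σ
    conv_rhs => rw [← hYpres.map_eq]
    rw [integral_map hYmeas.aemeasurable (hGmeas0 σ).aestronglyMeasurable]
  have hGYint : ∀ σ : Fin n → Bool,
      Integrable (fun p : Ω × Ω' => gfun F hFne Φ σ (Y p)) (P.prod P') :=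
    fun σ => integrable_of_abs_le' ((hGmeas0 σ).comp hYmeas) (fun p => hGabs σ _)
  -- RHS equals ∫ g dμ
  have hRHS : (∫ ω, (∫ ω', (2 ^ n : ℝ)⁻¹ * ∑ σ : Fin n → Bool,
          F.sup' hFne (fun f =>
            Φ (fun i => if σ i then f (X i ω) else f (X' i ω'))
              - Φ (fun i => if σ i then f (X' i ω') else f (X i ω))) ∂P') ∂P)
      = ∫ v, gfun F hFne Φ (fun _ => true) v ∂μ := by
    have hident : ∀ (ω : Ω) (ω' : Ω') (σ : Fin n → Bool),
        F.sup' hFne (fun f =>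
            Φ (fun i => if σ i then f (X i ω) else f (X' i ω'))
              - Φ (fun i => if σ i then f (X' i ω') else f (X i ω)))
          = gfun F hFne Φ σ (Y (ω, ω')) := fun _ _ _ => rfl
    simp_rw [hident]
    have hint : Integrable (fun p : Ω × Ω' =>
        (2 ^ n : ℝ)⁻¹ * ∑ σ : Fin n → Bool, gfun F hFne Φ σ (Y p)) (P.prod P') :=
      (integrable_finset_sum _ (fun σ _ => hGYint σ)).const_mul _
    rw [MeasureTheory.integral_integral hint]
    rw [MeasureTheory.integral_const_mul]
    rw [integral_finset_sum _ (fun σ _ => hGYint σ)]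
    simp_rw [hGY, hGint_eq]
    rw [Finset.sum_const]
    simp only [Finset.card_univ, Fintype.card_fun, Fintype.card_fin, Fintype.card_bool,
      nsmul_eq_mul, Nat.cast_pow, Nat.cast_ofNat]
    rw [inv_mul_cancel_left₀ (by positivity : ((2:ℝ) ^ n) ≠ 0)]
  rw [hRHS]
  -- now the LHS bound
  set σ₀ : Fin n → Bool := fun _ => false with hσ₀
  -- E[Φ(f∘X)] over P equals the same over X', P'
  have hc : ∀ f ∈ F, (∫ ω₀, Φ (fun i => f (X i ω₀)) ∂P)
      = ∫ ω', Φ (fun i => f (X' i ω')) ∂P' := by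
    intro f hf
    have hmΦ : Measurable (fun v : Fin n → 𝒳 => Φ (fun i => f (v i))) :=
      hΦmeas.comp (measurable_pi_lambda _ fun i => (hFmeas f hf).comp (measurable_pi_apply i))
    have e1 : ∫ v, Φ (fun i => f (v i)) ∂(Measure.pi m)
        = ∫ ω₀, Φ (fun i => f (X i ω₀)) ∂P := by
      rw [← hlawX, integral_map (measurable_pi_lambda _ hXmeas).aemeasurable
        hmΦ.aestronglyMeasurable]
    have e2 : ∫ v, Φ (fun i => f (v i)) ∂(Measure.pi m)
        = ∫ ω', Φ (fun i => f (X' i ω')) ∂P' := by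
      rw [← hlawX', integral_map (measurable_pi_lambda _ hX'meas).aemeasurable
        hmΦ.aestronglyMeasurable]
    rw [← e1, e2]
  -- pointwise: LHS integrand ≤ inner integral of gfun σ₀ ∘ Y
  have hGσ₀int : ∀ ω : Ω, Integrable (fun ω' => gfun F hFne Φ σ₀ (Y (ω, ω'))) P' := by
    intro ω
    refine integrable_of_abs_le' ?_ (fun ω' => hGabs σ₀ _)
    exact (hGmeas0 σ₀).comp (hYmeas.comp (measurable_prodMk_left))
  have key1 : ∀ ω : Ω, F.sup' hFne (fun f =>
        (∫ ω₀, Φ (fun i => f (X i ω₀)) ∂P) - Φ (fun i => f (X i ω)))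
      ≤ ∫ ω', gfun F hFne Φ σ₀ (Y (ω, ω')) ∂P' := by
    intro ω
    refine Finset.sup'_le _ _ (fun f hf => ?_)
    have hint' : Integrable (fun ω' => Φ (fun i => f (X' i ω'))) P' := by
      refine integrable_of_abs_le' ?_ (fun ω' => hΦb f hf _)
      exact hΦmeas.comp (measurable_pi_lambda _ fun i =>
        (hFmeas f hf).comp (hX'meas i))
    have hdecomp : (∫ ω₀, Φ (fun i => f (X i ω₀)) ∂P) - Φ (fun i => f (X i ω))
        = ∫ ω', (Φ (fun i => f (X' i ω')) - Φ (fun i => f (X i ω))) ∂P' := by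
      rw [hc f hf, integral_sub hint' (integrable_const _), integral_const]
      simp
    rw [hdecomp]
    refine integral_mono (hint'.sub (integrable_const _)) (hGσ₀int ω) (fun ω' => ?_)
    have hle := Finset.le_sup' (fun f =>
        Φ (fun i => if σ₀ i then f ((Y (ω, ω') i).1) else f ((Y (ω, ω') i).2))
          - Φ (fun i => if σ₀ i then f ((Y (ω, ω') i).2) else f ((Y (ω, ω') i).1))) hf
    simpa only [gfun, hσ₀, hYdef, Bool.false_eq_true, if_false] using hle
  -- integrability of both sides of key1
  have hLmeas : Measurable (fun ω => F.sup' hFne (fun f =>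
      (∫ ω₀, Φ (fun i => f (X i ω₀)) ∂P) - Φ (fun i => f (X i ω)))) := by
    have h1 : ∀ f ∈ F, Measurable (fun ω =>
        (∫ ω₀, Φ (fun i => f (X i ω₀)) ∂P) - Φ (fun i => f (X i ω))) := fun f hf =>
      measurable_const.sub (hΦmeas.comp (measurable_pi_lambda _ fun i =>
        (hFmeas f hf).comp (hXmeas i)))
    have h2 := Finset.measurable_sup' hFne h1
    have h3 : (F.sup' hFne (fun f ω =>
        (∫ ω₀, Φ (fun i => f (X i ω₀)) ∂P) - Φ (fun i => f (X i ω))))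
      = (fun ω => F.sup' hFne (fun f =>
        (∫ ω₀, Φ (fun i => f (X i ω₀)) ∂P) - Φ (fun i => f (X i ω)))) := by
      funext ω
      exact Finset.sup'_apply hFne _ ω
    rwa [h3] at h2
  have hLint : Integrable (fun ω => F.sup' hFne (fun f =>
      (∫ ω₀, Φ (fun i => f (X i ω₀)) ∂P) - Φ (fun i => f (X i ω)))) P := by
    refine integrable_of_abs_le' hLmeas (C := K + K) (fun ω => ?_)
    refine abs_sup'_le' hFne _ (fun f hf => ?_)
    refine le_trans (abs_sub _ _) (add_le_add ?_ (hΦb f hf _))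
    calc |∫ ω₀, Φ (fun i => f (X i ω₀)) ∂P|
        ≤ K * (P Set.univ).toReal := by
          rw [← Real.norm_eq_abs]
          refine norm_integral_le_of_norm_le_const ?_
          exact Filter.Eventually.of_forall fun ω₀ => by
            simpa [Real.norm_eq_abs] using hΦb f hf (fun i => X i ω₀)
      _ = K := by simp
  have hMint : Integrable (fun ω => ∫ ω', gfun F hFne Φ σ₀ (Y (ω, ω')) ∂P') P :=
    (hGYint σ₀).integral_prod_left
  calc (∫ ω, F.sup' hFne (fun f =>
        (∫ ω₀, Φ (fun i => f (X i ω₀)) ∂P) - Φ (fun i => f (X i ω))) ∂P)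
      ≤ ∫ ω, (∫ ω', gfun F hFne Φ σ₀ (Y (ω, ω')) ∂P') ∂P :=
        integral_mono hLint hMint key1
    _ = ∫ p, gfun F hFne Φ σ₀ (Y p) ∂(P.prod P') :=
        (MeasureTheory.integral_integral (hGYint σ₀))
    _ = ∫ v, gfun F hFne Φ σ₀ v ∂μ := hGY σ₀
    _ = ∫ v, gfun F hFne Φ (fun _ => true) v ∂μ := hGint_eq σ₀
end

section
/- Let X = (X_1, ..., X_n) be a vector of independent identically distributed random variables with values in a set 𝒳, and let ℱ be a finite class of functions f : 𝒳 → [0,1]. Then E[ sup_{f ∈ ℱ} ( E[f(X_1)] − (1/n) Σ_{i=1}^n f(X_i) ) ] ≤ (2/n) E[ R(ℱ(X)) ]. -/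
open MeasureTheory ProbabilityTheory Finset

private lemma abs_sup'_le_aux {β : Type*} {F : Finset β} (h : F.Nonempty) (g : β → ℝ) {C : ℝ}
    (hC : ∀ f ∈ F, |g f| ≤ C) : |F.sup' h g| ≤ C := by
  have hex := h
  obtain ⟨f0, hf0⟩ := hex
  refine abs_le.mpr ⟨le_trans (neg_le_of_abs_le (hC f0 hf0)) (Finset.le_sup' g hf0),
    Finset.sup'_le _ _ fun f hf => (abs_le.1 (hC f hf)).2⟩

private lemma int_bdd_aux {α : Type*} [MeasurableSpace α] {μ : Measure α} [IsFiniteMeasure μ]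
    {g : α → ℝ} (hg : Measurable g) {C : ℝ} (hb : ∀ x, |g x| ≤ C) : Integrable g μ :=
  ⟨hg.aestronglyMeasurable, HasFiniteIntegral.of_bounded (C := C)
    (ae_of_all _ (by simpa [Real.norm_eq_abs] using hb))⟩

private lemma meas_sup'_aux {α β : Type*} [MeasurableSpace α] {F : Finset β} (h : F.Nonempty)
    {H : β → α → ℝ} (hH : ∀ f ∈ F, Measurable (H f)) :
    Measurable fun x => F.sup' h fun f => H f x := by
  have : (fun x => F.sup' h fun f => H f x) = F.sup' h H := by
    funext x; rw [Finset.sup'_apply]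
  rw [this]; exact Finset.measurable_sup' h hH

/-- Let `X = (X_1,…,X_n)` be i.i.d. `𝒳`-valued random variables and `F` a
finite class of measurable functions `f : 𝒳 → [0,1]`. Then
`E[sup_{f ∈ F} (E[f(X_1)] - (1/n) ∑_i f(X_i))] ≤ (2/n) E[R(F(X))]`, where the Rademacher
average is `R(F(x)) = E_ε sup_{f ∈ F} ∑_i ε_i f(x_i)` with `ε` uniform on `{-1,1}ⁿ`
(realized as the average over `ε : Fin n → Bool` of `∑_i (±1) f(x_i)`). -/
theorem statement16
    (𝒳 Ω : Type) [MeasurableSpace 𝒳] [MeasurableSpace Ω]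
    (P : Measure Ω) [IsProbabilityMeasure P]
    (n : ℕ) (hn : 0 < n) (X : Fin n → Ω → 𝒳)
    (F : Finset (𝒳 → ℝ)) (hFne : F.Nonempty)
    -- X is a vector of independent, identically distributed random variables
    (hXmeas : ∀ i, Measurable (X i))
    (hXindep : iIndepFun X P)
    (hXident : ∀ i, Measure.map (X i) P = Measure.map (X ⟨0, hn⟩) P)
    -- F is a finite class of measurable functions with values in [0,1]
    (hFmeas : ∀ f ∈ F, Measurable f)
    (hFrange : ∀ f ∈ F, ∀ x : 𝒳, f x ∈ Set.Icc (0 : ℝ) 1) :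
    (∫ ω, F.sup' hFne (fun f =>
        (∫ ω', f (X ⟨0, hn⟩ ω') ∂P) - (n : ℝ)⁻¹ * ∑ i, f (X i ω)) ∂P)
      ≤ (2 / n) * ∫ ω, (2 ^ n : ℝ)⁻¹ * ∑ ε : Fin n → Bool,
          F.sup' hFne (fun f => ∑ i, (if ε i then (1 : ℝ) else -1) * f (X i ω)) ∂P := by
  classical
  have hnR : (0:ℝ) < (n:ℝ) := by exact_mod_cast hn
  have hfabs : ∀ f ∈ F, ∀ x, |f x| ≤ 1 := fun f hf x =>
    abs_le.mpr ⟨by linarith [(hFrange f hf x).1], (hFrange f hf x).2⟩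
  set μ0 : Measure 𝒳 := P.map (X ⟨0, hn⟩) with hμ0
  haveI : IsProbabilityMeasure μ0 := Measure.isProbabilityMeasure_map (hXmeas _).aemeasurable
  set ν : Measure (Fin n → 𝒳) := Measure.pi (fun _ => μ0) with hν
  haveI : IsProbabilityMeasure ν := by rw [hν]; infer_instance
  set π : Measure (Fin n → 𝒳 × 𝒳) := Measure.pi (fun _ => μ0.prod μ0) with hπ
  haveI : IsProbabilityMeasure π := by rw [hπ]; infer_instance
  set φ : Ω → Fin n → 𝒳 := fun ω i => X i ω with hφdef
  have hφm : Measurable φ := measurable_pi_lambda _ hXmeas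
  have hφmap : P.map φ = ν := by
    rw [hν]
    refine (Measure.pi_eq fun s hs => ?_).symm
    rw [Measure.map_apply hφm (MeasurableSet.univ_pi hs)]
    have hpre : φ ⁻¹' Set.pi Set.univ s = ⋂ i ∈ Finset.univ, X i ⁻¹' s i := by
      ext ω; simp [Set.mem_pi, hφdef]
    rw [hpre, hXindep.measure_inter_preimage_eq_mul Finset.univ (fun i _ => hs i)]
    refine Finset.prod_congr rfl fun i _ => ?_
    rw [← Measure.map_apply (hXmeas i) (hs i), hXident i, hμ0]
  -- projections and swaps
  set p1 : (Fin n → 𝒳 × 𝒳) → (Fin n → 𝒳) := fun z i => (z i).1 with hp1def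
  set p2 : (Fin n → 𝒳 × 𝒳) → (Fin n → 𝒳) := fun z i => (z i).2 with hp2def
  have hfstMP : MeasurePreserving (Prod.fst : 𝒳 × 𝒳 → 𝒳) (μ0.prod μ0) μ0 :=
    ⟨measurable_fst, by simp⟩
  have hsndMP : MeasurePreserving (Prod.snd : 𝒳 × 𝒳 → 𝒳) (μ0.prod μ0) μ0 :=
    ⟨measurable_snd, by simp⟩
  have hp1 : MeasurePreserving p1 π ν := measurePreserving_pi _ _ (fun _ => hfstMP)
  have hp2 : MeasurePreserving p2 π ν := measurePreserving_pi _ _ (fun _ => hsndMP)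
  set q : (Fin n → 𝒳 × 𝒳) → (Fin n → 𝒳) × (Fin n → 𝒳) :=
    (MeasurableEquiv.arrowProdEquivProdArrow 𝒳 𝒳 (Fin n) : _ → _) with hqdef
  have hq : MeasurePreserving q π (ν.prod ν) :=
    measurePreserving_arrowProdEquivProdArrow 𝒳 𝒳 (Fin n) (fun _ => μ0) (fun _ => μ0)
  have hq1 : ∀ z, (q z).1 = p1 z := fun _ => rfl
  have hq2 : ∀ z, (q z).2 = p2 z := fun _ => rfl
  set T : (Fin n → Bool) → (Fin n → 𝒳 × 𝒳) → (Fin n → 𝒳 × 𝒳) :=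
    fun ε z i => (if ε i then Prod.swap else id) (z i) with hTdef
  have hT : ∀ ε, MeasurePreserving (T ε) π π := by
    intro ε
    refine measurePreserving_pi _ _ fun i => ?_
    by_cases h : ε i
    · simpa [h] using (Measure.measurePreserving_swap : MeasurePreserving Prod.swap (μ0.prod μ0) (μ0.prod μ0))
    · simpa [h] using MeasurePreserving.id (μ0.prod μ0)
  -- basic functions
  set Sg : (𝒳 → ℝ) → (Fin n → 𝒳) → ℝ := fun f x => ∑ i, f (x i) with hSgdef
  set e : (Fin n → Bool) → Fin n → ℝ := fun ε i => if ε i then 1 else -1 with hedef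
  set Rad : (Fin n → Bool) → (Fin n → 𝒳) → ℝ :=
    fun ε y => F.sup' hFne (fun f => ∑ i, e ε i * f (y i)) with hRaddef
  set G : (Fin n → 𝒳) → ℝ :=
    fun x => F.sup' hFne (fun f => (∫ ω', f (X ⟨0, hn⟩ ω') ∂P) - (n:ℝ)⁻¹ * Sg f x) with hGdef
  set D : (Fin n → 𝒳) × (Fin n → 𝒳) → ℝ :=
    fun p => F.sup' hFne (fun f => (n:ℝ)⁻¹ * (Sg f p.2 - Sg f p.1)) with hDdef
  -- measurability
  have hSgm : ∀ f ∈ F, Measurable (Sg f) := fun f hf =>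
    Finset.measurable_sum _ fun i _ => (hFmeas f hf).comp (measurable_pi_apply i)
  have hRadm : ∀ ε, Measurable (Rad ε) := fun ε =>
    meas_sup'_aux hFne fun f hf =>
      Finset.measurable_sum _ fun i _ =>
        (measurable_const.mul ((hFmeas f hf).comp (measurable_pi_apply i)))
  have hGm : Measurable G :=
    meas_sup'_aux hFne fun f hf => measurable_const.sub ((hSgm f hf).const_mul _)
  have hDm : Measurable D :=
    meas_sup'_aux hFne fun f hf =>
      (((hSgm f hf).comp measurable_snd).sub ((hSgm f hf).comp measurable_fst)).const_mul _
  -- bounds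
  have hSgbd : ∀ f ∈ F, ∀ x : Fin n → 𝒳, |Sg f x| ≤ (n:ℝ) := by
    intro f hf x
    calc |Sg f x| ≤ ∑ i, |f (x i)| := Finset.abs_sum_le_sum_abs _ _
      _ ≤ ∑ _i : Fin n, (1:ℝ) := Finset.sum_le_sum fun i _ => hfabs f hf _
      _ = n := by simp
  have hcbd : ∀ f ∈ F, |∫ ω', f (X ⟨0, hn⟩ ω') ∂P| ≤ 1 := by
    intro f hf
    have := norm_integral_le_of_norm_le_const (μ := P)
      (f := fun ω' => f (X ⟨0, hn⟩ ω')) (C := 1)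
      (ae_of_all _ fun ω => by simpa [Real.norm_eq_abs] using hfabs f hf (X ⟨0, hn⟩ ω))
    simpa [Real.norm_eq_abs] using this
  have hRadbd : ∀ ε y, |Rad ε y| ≤ (n:ℝ) := by
    intro ε y
    refine abs_sup'_le_aux hFne _ fun f hf => ?_
    calc |∑ i, e ε i * f (y i)| ≤ ∑ i, |e ε i * f (y i)| := Finset.abs_sum_le_sum_abs _ _
      _ ≤ ∑ _i : Fin n, (1:ℝ) := by
          refine Finset.sum_le_sum fun i _ => ?_
          rw [abs_mul]
          have he1 : |e ε i| = 1 := by by_cases h : ε i <;> simp [hedef, h]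
          rw [he1, one_mul]; exact hfabs f hf _
      _ = n := by simp
  have hinvn : (0:ℝ) ≤ (n:ℝ)⁻¹ := inv_nonneg.2 hnR.le
  have hinvSg : ∀ f ∈ F, ∀ x : Fin n → 𝒳, |(n:ℝ)⁻¹ * Sg f x| ≤ 1 := by
    intro f hf x
    rw [abs_mul, abs_of_nonneg hinvn]
    calc (n:ℝ)⁻¹ * |Sg f x| ≤ (n:ℝ)⁻¹ * n :=
          mul_le_mul_of_nonneg_left (hSgbd f hf x) hinvn
      _ = 1 := inv_mul_cancel₀ hnR.ne'
  have hGbd : ∀ x, |G x| ≤ 2 := by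
    intro x
    refine abs_sup'_le_aux hFne _ fun f hf => ?_
    have h1 := hcbd f hf
    have h2 := hinvSg f hf x
    calc |(∫ ω', f (X ⟨0, hn⟩ ω') ∂P) - (n:ℝ)⁻¹ * Sg f x|
        ≤ |∫ ω', f (X ⟨0, hn⟩ ω') ∂P| + |(n:ℝ)⁻¹ * Sg f x| := abs_sub _ _
      _ ≤ 2 := by linarith
  have hDbd : ∀ p, |D p| ≤ 2 := by
    intro p
    refine abs_sup'_le_aux hFne _ fun f hf => ?_
    have h1 := hSgbd f hf p.2
    have h2 := hSgbd f hf p.1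
    calc |(n:ℝ)⁻¹ * (Sg f p.2 - Sg f p.1)|
        = (n:ℝ)⁻¹ * |Sg f p.2 - Sg f p.1| := by rw [abs_mul, abs_of_nonneg hinvn]
      _ ≤ (n:ℝ)⁻¹ * (2 * n) := by
          refine mul_le_mul_of_nonneg_left ?_ hinvn
          calc |Sg f p.2 - Sg f p.1| ≤ |Sg f p.2| + |Sg f p.1| := abs_sub _ _
            _ ≤ 2 * n := by linarith
      _ = 2 := by field_simp
  -- inner expectation identity
  have hci : ∀ f ∈ F, ∀ i : Fin n, (∫ y, f (y i) ∂ν) = ∫ ω', f (X ⟨0, hn⟩ ω') ∂P := by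
    intro f hf i
    have h1 : (∫ y, f (y i) ∂ν) = ∫ ω, f (X i ω) ∂P := by
      have hm : Measurable fun y : Fin n → 𝒳 => f (y i) :=
        (hFmeas f hf).comp (measurable_pi_apply i)
      rw [← hφmap, integral_map hφm.aemeasurable hm.aestronglyMeasurable]
    have h2 : (∫ ω, f (X i ω) ∂P) = ∫ a, f a ∂μ0 := by
      rw [← hXident i,
        integral_map (hXmeas i).aemeasurable (hFmeas f hf).aestronglyMeasurable]
    have h3 : (∫ a, f a ∂μ0) = ∫ ω', f (X ⟨0, hn⟩ ω') ∂P := by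
      rw [hμ0, integral_map (hXmeas _).aemeasurable (hFmeas f hf).aestronglyMeasurable]
    rw [h1, h2, h3]
  have hkey : ∀ f ∈ F, (∫ y, (n:ℝ)⁻¹ * Sg f y ∂ν) = ∫ ω', f (X ⟨0, hn⟩ ω') ∂P := by
    intro f hf
    have hint : ∀ i : Fin n, Integrable (fun y : Fin n → 𝒳 => f (y i)) ν := fun i =>
      int_bdd_aux ((hFmeas f hf).comp (measurable_pi_apply i)) (C := 1) (fun y => hfabs f hf _)
    calc ∫ y, (n:ℝ)⁻¹ * Sg f y ∂ν = (n:ℝ)⁻¹ * ∫ y, Sg f y ∂ν := by rw [integral_const_mul]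
      _ = (n:ℝ)⁻¹ * ∑ i : Fin n, ∫ y, f (y i) ∂ν := by
          rw [hSgdef]; congr 1
          exact integral_finset_sum _ fun i _ => hint i
      _ = (n:ℝ)⁻¹ * ∑ _i : Fin n, ∫ ω', f (X ⟨0, hn⟩ ω') ∂P := by
          congr 1; exact Finset.sum_congr rfl fun i _ => hci f hf i
      _ = ∫ ω', f (X ⟨0, hn⟩ ω') ∂P := by
          rw [Finset.sum_const, Finset.card_univ, Fintype.card_fin, nsmul_eq_mul]
          exact inv_mul_cancel_left₀ hnR.ne' _
  -- Step B : pointwise ghost-sample bound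
  have hGle : ∀ x, G x ≤ ∫ y, D (x, y) ∂ν := by
    intro x
    have hDi : Integrable (fun y => D (x, y)) ν :=
      int_bdd_aux (hDm.comp measurable_prodMk_left) (C := 2) (fun y => hDbd _)
    refine Finset.sup'_le _ _ fun f hf => ?_
    have hSi : Integrable (fun y => (n:ℝ)⁻¹ * Sg f y) ν :=
      (int_bdd_aux (hSgm f hf) (C := n) (hSgbd f hf)).const_mul _
    have heq : (∫ ω', f (X ⟨0, hn⟩ ω') ∂P) - (n:ℝ)⁻¹ * Sg f x
        = ∫ y, ((n:ℝ)⁻¹ * Sg f y - (n:ℝ)⁻¹ * Sg f x) ∂ν := by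
      rw [integral_sub hSi (integrable_const _), hkey f hf]
      simp
    rw [heq]
    refine integral_mono (hSi.sub (integrable_const _)) hDi fun y => ?_
    have heq2 : (n:ℝ)⁻¹ * Sg f y - (n:ℝ)⁻¹ * Sg f x
        = (n:ℝ)⁻¹ * (Sg f (x, y).2 - Sg f (x, y).1) := (mul_sub _ _ _).symm
    rw [heq2]
    exact Finset.le_sup' (fun f => (n:ℝ)⁻¹ * (Sg f (x, y).2 - Sg f (x, y).1)) hf
  -- chain of integrals
  have hDint : Integrable D (ν.prod ν) := int_bdd_aux hDm hDbd
  have hL : (∫ ω, F.sup' hFne (fun f =>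
        (∫ ω', f (X ⟨0, hn⟩ ω') ∂P) - (n : ℝ)⁻¹ * ∑ i, f (X i ω)) ∂P) = ∫ x, G x ∂ν := by
    rw [← hφmap, integral_map hφm.aemeasurable hGm.aestronglyMeasurable]
  have step3 : (∫ x, G x ∂ν) ≤ ∫ x, (∫ y, D (x, y) ∂ν) ∂ν :=
    integral_mono (int_bdd_aux hGm hGbd) hDint.integral_prod_left hGle
  have step4 : (∫ x, (∫ y, D (x, y) ∂ν) ∂ν) = ∫ p, D p ∂(ν.prod ν) := integral_integral hDint
  have step5 : (∫ p, D p ∂(ν.prod ν)) = ∫ z, D (q z) ∂π := by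
    rw [← hq.map_eq, integral_map hq.measurable.aemeasurable hDm.aestronglyMeasurable]
  have step6 : ∀ ε, (∫ z, D (q z) ∂π) = ∫ z, D (q (T ε z)) ∂π := by
    intro ε
    have hm : Measurable fun z => D (q z) := hDm.comp hq.measurable
    nth_rewrite 1 [← (hT ε).map_eq]
    rw [integral_map (hT ε).measurable.aemeasurable hm.aestronglyMeasurable]
  have hTapp : ∀ ε z i, T ε z i = if ε i then (z i).swap else z i := by
    intro ε z i; by_cases h : ε i <;> simp [hTdef, h]
  have step7 : ∀ ε z, D (q (T ε z)) ≤
      (n:ℝ)⁻¹ * (Rad (fun i => !(ε i)) (p2 z) + Rad ε (p1 z)) := by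
    intro ε z
    refine Finset.sup'_le _ _ fun f hf => ?_
    have hs : Sg f (q (T ε z)).2 - Sg f (q (T ε z)).1
        = (∑ i, e (fun j => !(ε j)) i * f (p2 z i)) + ∑ i, e ε i * f (p1 z i) := by
      rw [hSgdef]
      simp only []
      rw [← Finset.sum_sub_distrib, ← Finset.sum_add_distrib]
      refine Finset.sum_congr rfl fun i _ => ?_
      rw [hq1, hq2, hp1def, hp2def]
      simp only []
      rw [hTapp]
      by_cases h : ε i <;> simp [hedef, h, Prod.swap] <;> ring
    calc (n:ℝ)⁻¹ * (Sg f (q (T ε z)).2 - Sg f (q (T ε z)).1)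
        = (n:ℝ)⁻¹ * ((∑ i, e (fun j => !(ε j)) i * f (p2 z i)) + ∑ i, e ε i * f (p1 z i)) := by
          rw [hs]
      _ ≤ (n:ℝ)⁻¹ * (Rad (fun i => !(ε i)) (p2 z) + Rad ε (p1 z)) := by
          refine mul_le_mul_of_nonneg_left (add_le_add ?_ ?_) hinvn
          · exact Finset.le_sup' (fun f => ∑ i, e (fun j => !(ε j)) i * f (p2 z i)) hf
          · exact Finset.le_sup' (fun f => ∑ i, e ε i * f (p1 z i)) hf
  have hp1int : ∀ σ : Fin n → Bool, Integrable (fun z => Rad σ (p1 z)) π := fun σ =>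
    int_bdd_aux ((hRadm σ).comp hp1.measurable) (C := n) (fun z => hRadbd σ _)
  have hp2int : ∀ σ : Fin n → Bool, Integrable (fun z => Rad σ (p2 z)) π := fun σ =>
    int_bdd_aux ((hRadm σ).comp hp2.measurable) (C := n) (fun z => hRadbd σ _)
  have hchg1 : ∀ σ : Fin n → Bool, (∫ z, Rad σ (p1 z) ∂π) = ∫ y, Rad σ y ∂ν := by
    intro σ
    rw [← hp1.map_eq, integral_map hp1.measurable.aemeasurable (hRadm σ).aestronglyMeasurable]
  have hchg2 : ∀ σ : Fin n → Bool, (∫ z, Rad σ (p2 z) ∂π) = ∫ y, Rad σ y ∂ν := by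
    intro σ
    rw [← hp2.map_eq, integral_map hp2.measurable.aemeasurable (hRadm σ).aestronglyMeasurable]
  have step8 : ∀ ε : Fin n → Bool, (∫ z, D (q z) ∂π)
      ≤ (n:ℝ)⁻¹ * ((∫ y, Rad (fun i => !(ε i)) y ∂ν) + ∫ y, Rad ε y ∂ν) := by
    intro ε
    rw [step6 ε]
    calc (∫ z, D (q (T ε z)) ∂π)
        ≤ ∫ z, (n:ℝ)⁻¹ * (Rad (fun i => !(ε i)) (p2 z) + Rad ε (p1 z)) ∂π := by
          refine integral_mono
            (int_bdd_aux ((hDm.comp hq.measurable).comp (hT ε).measurable) (C := 2)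
              (fun z => hDbd _))
            (((hp2int _).add (hp1int _)).const_mul _) (step7 ε)
      _ = (n:ℝ)⁻¹ * ((∫ y, Rad (fun i => !(ε i)) y ∂ν) + ∫ y, Rad ε y ∂ν) := by
          rw [integral_const_mul, integral_add (hp2int _) (hp1int _), hchg1, hchg2]
  -- averaging over sign vectors
  have hcardR : ((Finset.univ : Finset (Fin n → Bool)).card : ℝ) = 2 ^ n := by
    rw [Finset.card_univ, Fintype.card_fun, Fintype.card_bool, Fintype.card_fin]
    push_cast; ring
  have h2npos : (0:ℝ) < 2 ^ n := by positivity
  have hflip : (∑ ε : Fin n → Bool, ∫ y, Rad (fun i => !(ε i)) y ∂ν)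
      = ∑ ε : Fin n → Bool, ∫ y, Rad ε y ∂ν := by
    have hinv : Function.Involutive (fun ε : Fin n → Bool => fun i => !(ε i)) := by
      intro ε; funext i; simp
    exact Fintype.sum_equiv hinv.toPerm _ _ (fun ε => rfl)
  have hJavg : (∫ z, D (q z) ∂π)
      ≤ (2 ^ n : ℝ)⁻¹ * ∑ ε : Fin n → Bool,
          ((n:ℝ)⁻¹ * ((∫ y, Rad (fun i => !(ε i)) y ∂ν) + ∫ y, Rad ε y ∂ν)) := by
    have h1 : (∫ z, D (q z) ∂π)
        = (2 ^ n : ℝ)⁻¹ * ∑ _ε : Fin n → Bool, (∫ z, D (q z) ∂π) := by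
      rw [Finset.sum_const, nsmul_eq_mul, hcardR, ← mul_assoc,
        inv_mul_cancel₀ h2npos.ne', one_mul]
    rw [h1]
    exact mul_le_mul_of_nonneg_left (Finset.sum_le_sum fun ε _ => step8 ε)
      (inv_nonneg.2 h2npos.le)
  -- identify the RHS
  have hRHS : (∫ ω, (2 ^ n : ℝ)⁻¹ * ∑ ε : Fin n → Bool,
        F.sup' hFne (fun f => ∑ i, (if ε i then (1 : ℝ) else -1) * f (X i ω)) ∂P)
      = (2 ^ n : ℝ)⁻¹ * ∑ ε : Fin n → Bool, ∫ y, Rad ε y ∂ν := by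
    have h1 : ∀ ε : Fin n → Bool, (∫ ω, Rad ε (φ ω) ∂P) = ∫ y, Rad ε y ∂ν := by
      intro ε
      rw [← hφmap, integral_map hφm.aemeasurable (hRadm ε).aestronglyMeasurable]
    have hRint' : ∀ ε : Fin n → Bool, Integrable (fun ω => Rad ε (φ ω)) P := fun ε =>
      int_bdd_aux ((hRadm ε).comp hφm) (C := n) (fun ω => hRadbd ε (φ ω))
    have hshape : (∫ ω, (2 ^ n : ℝ)⁻¹ * ∑ ε : Fin n → Bool,
        F.sup' hFne (fun f => ∑ i, (if ε i then (1 : ℝ) else -1) * f (X i ω)) ∂P)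
        = ∫ ω, (2 ^ n : ℝ)⁻¹ * ∑ ε : Fin n → Bool, Rad ε (φ ω) ∂P := rfl
    rw [hshape, integral_const_mul, integral_finset_sum _ (fun ε _ => hRint' ε)]
    congr 1
    exact Finset.sum_congr rfl fun ε _ => h1 ε
  -- assemble
  calc (∫ ω, F.sup' hFne (fun f =>
        (∫ ω', f (X ⟨0, hn⟩ ω') ∂P) - (n : ℝ)⁻¹ * ∑ i, f (X i ω)) ∂P)
      = ∫ x, G x ∂ν := hL
    _ ≤ ∫ x, (∫ y, D (x, y) ∂ν) ∂ν := step3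
    _ = ∫ p, D p ∂(ν.prod ν) := step4
    _ = ∫ z, D (q z) ∂π := step5
    _ ≤ (2 ^ n : ℝ)⁻¹ * ∑ ε : Fin n → Bool,
          ((n:ℝ)⁻¹ * ((∫ y, Rad (fun i => !(ε i)) y ∂ν) + ∫ y, Rad ε y ∂ν)) := hJavg
    _ = (2 / n) * ((2 ^ n : ℝ)⁻¹ * ∑ ε : Fin n → Bool, ∫ y, Rad ε y ∂ν) := by
        rw [← Finset.mul_sum, Finset.sum_add_distrib, hflip]
        ring
    _ = (2 / n) * ∫ ω, (2 ^ n : ℝ)⁻¹ * ∑ ε : Fin n → Bool,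
          F.sup' hFne (fun f => ∑ i, (if ε i then (1 : ℝ) else -1) * f (X i ω)) ∂P := by
        rw [hRHS]
end
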